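/- arXiv:1101.0478 — 6 statements merged into one kernel-verified Lean document; each statement's English description precedes it below -/
import Mathlib

section
/- There exists a constant C > 0 such that for every measurable set E ⊆ [1,∞) one has ∫₁^∞ e^{−2ρt} ( ∫_{E ∩ {r : |t−r| ≥ 1}} e^{−ρr} Δ(r) |t−r|^{−1} dr )² Δ(t) dt ≤ C · μ(E)². -/
open MeasureTheory Real Set
open scoped ENNReal

/-- The Jacobi weight `Δ(t) = (2 sinh t)^(2α+1) (2 cosh t)^(2β+1)`. -/
noncomputable def Δj (α β : ℝ) (t : ℝ) : ℝ :=
  (2 * Real.sinh t) ^ (2 * α + 1) * (2 * Real.cosh t) ^ (2 * β + 1)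

/-- The measure `dμ = Δ(t) dt`. -/
noncomputable def μj (α β : ℝ) : Measure ℝ :=
  MeasureTheory.volume.withDensity fun t => ENNReal.ofReal (Δj α β t)

/-- The truncated kernel `u ↦ 1_{|u| ≥ 1} |u|⁻¹` as an `ℝ≥0∞`-valued function. -/
noncomputable def kerF : ℝ → ℝ≥0∞ :=
  fun u => ({u : ℝ | 1 ≤ |u|}).indicator (fun u => ENNReal.ofReal |u|⁻¹) u

lemma kerF_set_meas : MeasurableSet {u : ℝ | 1 ≤ |u|} :=
  measurableSet_le measurable_const continuous_abs.measurable

lemma kerF_meas : Measurable kerF :=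
  (continuous_abs.measurable.inv.ennreal_ofReal).indicator kerF_set_meas

lemma kerF_ne_top (u : ℝ) : kerF u ≠ ∞ := by
  unfold kerF
  by_cases h : u ∈ {u : ℝ | 1 ≤ |u|} <;>
    simp [Set.indicator_of_mem, Set.indicator_of_notMem, h]

lemma Delta_upper (α β : ℝ) (hβα : β < α) (hβ : -(1/2 : ℝ) < β) {r : ℝ} (hr : 0 ≤ r) :
    Δj α β r ≤ 2 ^ (2*β+1) * Real.exp (2*(α+β+1)*r) := by
  have hα : -(1/2:ℝ) < α := hβ.trans hβα
  have h2a : 0 ≤ 2*α+1 := by linarith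
  have h2b : 0 ≤ 2*β+1 := by linarith
  have hsinh : Real.sinh r = (Real.exp r - Real.exp (-r))/2 := Real.sinh_eq r
  have hcosh : Real.cosh r = (Real.exp r + Real.exp (-r))/2 := Real.cosh_eq r
  have he : Real.exp (-r) ≤ Real.exp r := Real.exp_le_exp.mpr (by linarith)
  have hs0 : 0 ≤ 2 * Real.sinh r := by rw [hsinh]; linarith
  have hs1 : 2 * Real.sinh r ≤ Real.exp r := by
    rw [hsinh]; have := (Real.exp_pos (-r)).le; linarith
  have hc0 : 0 ≤ 2 * Real.cosh r := by positivity
  have hc1 : 2 * Real.cosh r ≤ 2 * Real.exp r := by rw [hcosh]; linarith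
  have A : (2*Real.sinh r) ^ (2*α+1) ≤ (Real.exp r) ^ (2*α+1) :=
    Real.rpow_le_rpow hs0 hs1 h2a
  have B : (2*Real.cosh r) ^ (2*β+1) ≤ (2*Real.exp r) ^ (2*β+1) :=
    Real.rpow_le_rpow hc0 hc1 h2b
  have hmulrpow : (2*Real.exp r)^(2*β+1) = 2^(2*β+1) * (Real.exp r)^(2*β+1) :=
    Real.mul_rpow (by norm_num) (Real.exp_pos r).le
  calc Δj α β r = (2*Real.sinh r)^(2*α+1) * (2*Real.cosh r)^(2*β+1) := rfl
    _ ≤ (Real.exp r)^(2*α+1) * (2^(2*β+1) * (Real.exp r)^(2*β+1)) := by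
        rw [← hmulrpow]
        exact mul_le_mul A B (Real.rpow_nonneg hc0 _) (Real.rpow_nonneg (Real.exp_pos r).le _)
    _ = 2^(2*β+1) * ((Real.exp r)^(2*α+1) * (Real.exp r)^(2*β+1)) := by ring
    _ = 2^(2*β+1) * Real.exp (2*(α+β+1)*r) := by
        rw [← Real.rpow_add (Real.exp_pos r), ← Real.exp_mul]
        congr 1
        ring

lemma Delta_lower (α β : ℝ) (hβα : β < α) (hβ : -(1/2 : ℝ) < β) {r : ℝ} (hr : 1 ≤ r) :
    Real.exp (2*(α+β+1)*r) ≤ ((1 - Real.exp (-2)) ^ (2*α+1))⁻¹ * Δj α β r := by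
  have hα : -(1/2:ℝ) < α := hβ.trans hβα
  have h2a : 0 ≤ 2*α+1 := by linarith
  have h2b : 0 ≤ 2*β+1 := by linarith
  have he2 : Real.exp (-2:ℝ) < 1 := by
    have := Real.exp_lt_exp.mpr (show (-2:ℝ) < 0 by norm_num)
    simpa [Real.exp_zero] using this
  have h0 : 0 < 1 - Real.exp (-2:ℝ) := by linarith
  set K : ℝ := (1 - Real.exp (-2)) ^ (2*α+1) with hKdef
  have hK : 0 < K := Real.rpow_pos_of_pos h0 _
  have hsinh : Real.sinh r = (Real.exp r - Real.exp (-r))/2 := Real.sinh_eq r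
  have hcosh : Real.cosh r = (Real.exp r + Real.exp (-r))/2 := Real.cosh_eq r
  have hprod : Real.exp (-2:ℝ) * Real.exp r = Real.exp (-2 + r) := (Real.exp_add _ _).symm
  have hle : Real.exp (-r) ≤ Real.exp (-2 + r) := Real.exp_le_exp.mpr (by linarith)
  have hs : (1 - Real.exp (-2)) * Real.exp r ≤ 2 * Real.sinh r := by
    rw [hsinh]; nlinarith [hprod, hle, Real.exp_pos r]
  have hc : Real.exp r ≤ 2 * Real.cosh r := by
    rw [hcosh]; have := (Real.exp_pos (-r)).le; linarith
  have hs0 : 0 ≤ 2 * Real.sinh r := le_trans (by positivity) hs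
  have A : ((1 - Real.exp (-2)) * Real.exp r) ^ (2*α+1) ≤ (2*Real.sinh r) ^ (2*α+1) :=
    Real.rpow_le_rpow (by positivity) hs h2a
  have B : (Real.exp r) ^ (2*β+1) ≤ (2*Real.cosh r) ^ (2*β+1) :=
    Real.rpow_le_rpow (Real.exp_pos r).le hc h2b
  have hKE : K * Real.exp (2*(α+β+1)*r) ≤ Δj α β r := by
    have h1 : ((1 - Real.exp (-2)) * Real.exp r) ^ (2*α+1)
        = K * (Real.exp r)^(2*α+1) := Real.mul_rpow h0.le (Real.exp_pos r).le
    calc K * Real.exp (2*(α+β+1)*r)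
        = K * ((Real.exp r)^(2*α+1) * (Real.exp r)^(2*β+1)) := by
          rw [← Real.rpow_add (Real.exp_pos r), ← Real.exp_mul]
          congr 2
          ring
      _ = (((1 - Real.exp (-2)) * Real.exp r) ^ (2*α+1)) * (Real.exp r)^(2*β+1) := by
          rw [h1]; ring
      _ ≤ (2*Real.sinh r)^(2*α+1) * (2*Real.cosh r)^(2*β+1) :=
          mul_le_mul A B (Real.rpow_nonneg (Real.exp_pos r).le _) (Real.rpow_nonneg hs0 _)
      _ = Δj α β r := rfl
  rw [inv_mul_eq_div, le_div_iff₀ hK]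
  linarith [hKE]

lemma kerF_sq_lintegral : ∫⁻ u, (kerF u)^2 ≤ 2 := by
  set G : ℝ → ℝ≥0∞ := fun u => (ENNReal.ofReal |u|⁻¹)^2 with hGdef
  have hGm : Measurable G := (continuous_abs.measurable.inv.ennreal_ofReal).pow_const 2
  have h1 : ∀ u, (kerF u)^2 = ({u : ℝ | 1 ≤ |u|}).indicator G u := by
    intro u
    unfold kerF
    by_cases h : u ∈ {u : ℝ | 1 ≤ |u|} <;>
      simp [Set.indicator_of_mem, Set.indicator_of_notMem, h, hGdef]
  have hsplit : {u : ℝ | 1 ≤ |u|} = Iic (-1:ℝ) ∪ Ici (1:ℝ) := by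
    ext u
    simp only [mem_setOf_eq, mem_union, mem_Iic, mem_Ici, le_abs]
    constructor
    · rintro (h | h)
      · right; exact h
      · left; linarith
    · rintro (h | h)
      · right; linarith
      · left; exact h
  have hIci : ∫⁻ u in Ici (1:ℝ), G u = 1 := by
    rw [← setLIntegral_congr (Ioi_ae_eq_Ici (a := (1:ℝ)))]
    have hcong : ∀ᵐ u ∂(volume : Measure ℝ), u ∈ Ioi (1:ℝ) →
        G u = ENNReal.ofReal (u ^ (-2:ℝ)) := by
      refine ae_of_all _ fun u hu => ?_
      have hu1 : (1:ℝ) < u := hu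
      have hupos : (0:ℝ) < u := by linarith
      have habs : |u| = u := abs_of_pos hupos
      have hrp : u ^ (-2:ℝ) = (u⁻¹)^2 := by
        rw [show (-2:ℝ) = -((2:ℕ):ℝ) by norm_num, Real.rpow_neg hupos.le,
          Real.rpow_natCast, inv_pow]
      rw [hGdef]
      simp only
      rw [habs, ← ENNReal.ofReal_pow (by positivity), hrp]
    rw [setLIntegral_congr_fun_ae measurableSet_Ioi hcong]
    have hint : IntegrableOn (fun u : ℝ => u ^ (-2:ℝ)) (Ioi 1) :=
      integrableOn_Ioi_rpow_of_lt (by norm_num) one_pos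
    have hnn : 0 ≤ᵐ[volume.restrict (Ioi (1:ℝ))] fun u : ℝ => u ^ (-2:ℝ) := by
      refine (ae_restrict_iff' measurableSet_Ioi).2 (ae_of_all _ fun u hu => ?_)
      exact Real.rpow_nonneg (by linarith [mem_Ioi.mp hu]) _
    rw [← ofReal_integral_eq_lintegral_ofReal hint hnn,
      integral_Ioi_rpow_of_lt (by norm_num) one_pos]
    norm_num
  have hIic : ∫⁻ u in Iic (-1:ℝ), G u = ∫⁻ u in Ici (1:ℝ), G u := by
    have hkey : ∀ u, (Iic (-1:ℝ)).indicator G (-u) = (Ici (1:ℝ)).indicator G u := by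
      intro u
      by_cases h : (1:ℝ) ≤ u
      · rw [Set.indicator_of_mem (show -u ∈ Iic (-1:ℝ) by simp [mem_Iic]; linarith),
          Set.indicator_of_mem (show u ∈ Ici (1:ℝ) from h)]
        simp [hGdef, abs_neg]
      · rw [Set.indicator_of_notMem (show -u ∉ Iic (-1:ℝ) by simp [mem_Iic]; linarith [lt_of_not_ge h]),
          Set.indicator_of_notMem (show u ∉ Ici (1:ℝ) by simpa [mem_Ici] using h)]
    have hinv : ∫⁻ u, (Iic (-1:ℝ)).indicator G (-u) = ∫⁻ u, (Iic (-1:ℝ)).indicator G u := by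
      have h := lintegral_map (μ := (volume : Measure ℝ))
        (f := (Iic (-1:ℝ)).indicator G)
        (hGm.indicator measurableSet_Iic) measurable_neg
      rw [Measure.map_neg_eq_self] at h
      exact h.symm
    rw [← lintegral_indicator measurableSet_Iic, ← lintegral_indicator measurableSet_Ici,
      ← hinv]
    exact lintegral_congr hkey
  calc ∫⁻ u, (kerF u)^2 = ∫⁻ u in Iic (-1:ℝ) ∪ Ici (1:ℝ), G u := by
        simp_rw [h1, hsplit]
        exact lintegral_indicator (by rw [← hsplit]; exact kerF_set_meas) _
    _ ≤ (∫⁻ u in Iic (-1:ℝ), G u) + ∫⁻ u in Ici (1:ℝ), G u := lintegral_union_le _ _ _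
    _ = 1 + 1 := by rw [hIic, hIci]
    _ = 2 := by norm_num

theorem stmt1 (α β : ℝ) (hβα : β < α) (hβ : -(1/2 : ℝ) < β) :
    ∃ C : ℝ, 0 < C ∧
      ∀ E : Set ℝ, MeasurableSet E → E ⊆ Set.Ici 1 →
        (∫⁻ t in Set.Ici (1 : ℝ),
            ENNReal.ofReal (Real.exp (-2 * (α + β + 1) * t)) *
              (∫⁻ r in E ∩ {r : ℝ | 1 ≤ |t - r|},
                  ENNReal.ofReal (Real.exp (-(α + β + 1) * r) * Δj α β r * |t - r|⁻¹)) ^ 2 *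
              ENNReal.ofReal (Δj α β t)) ≤
          ENNReal.ofReal C * (μj α β E) ^ 2 := by
  have hα : -(1/2:ℝ) < α := hβ.trans hβα
  have hq : 0 < α + β + 1 := by linarith
  have he2 : Real.exp (-2:ℝ) < 1 := by
    have := Real.exp_lt_exp.mpr (show (-2:ℝ) < 0 by norm_num)
    simpa [Real.exp_zero] using this
  set C1 : ℝ := 2 ^ (2*β+1) with hC1def
  have hC1 : 0 < C1 := Real.rpow_pos_of_pos (by norm_num) _
  set c3 : ℝ := ((1 - Real.exp (-2)) ^ (2*α+1))⁻¹ with hc3def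
  have hc3 : 0 < c3 := inv_pos.mpr (Real.rpow_pos_of_pos (by linarith) _)
  refine ⟨4 * C1 * (C1 * c3)^2, by positivity, ?_⟩
  intro E hE hE1
  set q : ℝ := α + β + 1 with hqdef
  have hΔm : Measurable (Δj α β) := by
    unfold Δj
    exact ((Real.continuous_sinh.measurable.const_mul 2).pow measurable_const).mul
      ((Real.continuous_cosh.measurable.const_mul 2).pow measurable_const)
  set g : ℝ → ℝ≥0∞ :=
    fun r => E.indicator (fun r => ENNReal.ofReal (C1 * Real.exp (q * r))) r with hgdef
  have hgm : Measurable g :=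
    (((measurable_id.const_mul q).exp.const_mul C1).ennreal_ofReal).indicator hE
  have hgtop : ∀ r, g r ≠ ∞ := by
    intro r
    rw [hgdef]
    by_cases h : r ∈ E <;>
      simp [Set.indicator_of_mem, Set.indicator_of_notMem, h]
  set H : ℝ → ℝ → ℝ≥0∞ := fun t r => g r * kerF (t - r) with hHdef
  have hHm : Measurable (fun p : ℝ × ℝ => H p.1 p.2) :=
    (hgm.comp measurable_snd).mul (kerF_meas.comp (measurable_fst.sub measurable_snd))
  have hHm1 : ∀ t, Measurable (H t) := fun t =>
    hHm.comp (measurable_const.prodMk measurable_id)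
  have hHtop : ∀ t r, H t r ≠ ∞ := fun t r =>
    ENNReal.mul_ne_top (hgtop r) (kerF_ne_top _)
  have hQm : Measurable fun t => ∫⁻ r, H t r :=
    Measurable.lintegral_prod_right (f := H) hHm
  -- Step 1 : inner bound
  have step1 : ∀ t : ℝ, (∫⁻ r in E ∩ {r : ℝ | 1 ≤ |t - r|},
      ENNReal.ofReal (Real.exp (-q * r) * Δj α β r * |t - r|⁻¹)) ≤ ∫⁻ r, H t r := by
    intro t
    refine le_trans (setLIntegral_mono (hHm1 t) ?_) (setLIntegral_le_lintegral _ _)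
    rintro r ⟨hrE, hrt⟩
    have hr1 : (1:ℝ) ≤ r := hE1 hrE
    have habs : (1:ℝ) ≤ |t - r| := hrt
    have hΔ : Δj α β r ≤ C1 * Real.exp (2*q*r) := Delta_upper α β hβα hβ (by linarith)
    have hexpc : Real.exp (-q*r) * Real.exp (2*q*r) = Real.exp (q*r) := by
      rw [← Real.exp_add]; congr 1; ring
    have hptw : Real.exp (-q * r) * Δj α β r * |t - r|⁻¹
        ≤ (C1 * Real.exp (q * r)) * |t - r|⁻¹ := by
      apply mul_le_mul_of_nonneg_right _ (by positivity)
      calc Real.exp (-q*r) * Δj α β r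
          ≤ Real.exp (-q*r) * (C1 * Real.exp (2*q*r)) :=
            mul_le_mul_of_nonneg_left hΔ (Real.exp_pos _).le
        _ = C1 * (Real.exp (-q*r) * Real.exp (2*q*r)) := by ring
        _ = C1 * Real.exp (q*r) := by rw [hexpc]
    have hH : H t r = ENNReal.ofReal ((C1 * Real.exp (q * r)) * |t - r|⁻¹) := by
      simp only [hHdef, hgdef]
      unfold kerF
      rw [Set.indicator_of_mem hrE,
        Set.indicator_of_mem (show t - r ∈ {u : ℝ | 1 ≤ |u|} from habs),
        ← ENNReal.ofReal_mul (by positivity)]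
    rw [hH]
    exact ENNReal.ofReal_le_ofReal hptw
  -- combined outer bound
  have step2 : (∫⁻ t in Set.Ici (1 : ℝ),
        ENNReal.ofReal (Real.exp (-2 * q * t)) *
          (∫⁻ r in E ∩ {r : ℝ | 1 ≤ |t - r|},
              ENNReal.ofReal (Real.exp (-q * r) * Δj α β r * |t - r|⁻¹)) ^ 2 *
          ENNReal.ofReal (Δj α β t))
      ≤ ENNReal.ofReal C1 * ∫⁻ t, (∫⁻ r, H t r)^2 := by
    calc (∫⁻ t in Set.Ici (1 : ℝ),
        ENNReal.ofReal (Real.exp (-2 * q * t)) *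
          (∫⁻ r in E ∩ {r : ℝ | 1 ≤ |t - r|},
              ENNReal.ofReal (Real.exp (-q * r) * Δj α β r * |t - r|⁻¹)) ^ 2 *
          ENNReal.ofReal (Δj α β t))
        ≤ ∫⁻ t in Set.Ici (1:ℝ), ENNReal.ofReal C1 * (∫⁻ r, H t r)^2 := by
          apply setLIntegral_mono (measurable_const.mul (hQm.pow_const 2))
          intro t ht
          have ht1 : (1:ℝ) ≤ t := ht
          have h1 : (∫⁻ r in E ∩ {r : ℝ | 1 ≤ |t - r|},
              ENNReal.ofReal (Real.exp (-q * r) * Δj α β r * |t - r|⁻¹)) ^ 2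
              ≤ (∫⁻ r, H t r)^2 := pow_le_pow_left' (step1 t) 2
          have hexpc : Real.exp (-2*q*t) * Real.exp (2*q*t) = 1 := by
            rw [← Real.exp_add, show -2*q*t + 2*q*t = 0 by ring, Real.exp_zero]
          have h2 : ENNReal.ofReal (Real.exp (-2*q*t)) * ENNReal.ofReal (Δj α β t)
              ≤ ENNReal.ofReal C1 := by
            rw [← ENNReal.ofReal_mul (Real.exp_pos _).le]
            apply ENNReal.ofReal_le_ofReal
            have hΔ : Δj α β t ≤ C1 * Real.exp (2*q*t) :=
              Delta_upper α β hβα hβ (by linarith)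
            calc Real.exp (-2*q*t) * Δj α β t
                ≤ Real.exp (-2*q*t) * (C1 * Real.exp (2*q*t)) :=
                  mul_le_mul_of_nonneg_left hΔ (Real.exp_pos _).le
              _ = C1 * (Real.exp (-2*q*t) * Real.exp (2*q*t)) := by ring
              _ = C1 := by rw [hexpc, mul_one]
          calc ENNReal.ofReal (Real.exp (-2 * q * t)) *
                (∫⁻ r in E ∩ {r : ℝ | 1 ≤ |t - r|},
                  ENNReal.ofReal (Real.exp (-q * r) * Δj α β r * |t - r|⁻¹)) ^ 2 *
                ENNReal.ofReal (Δj α β t)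
              = (ENNReal.ofReal (Real.exp (-2*q*t)) * ENNReal.ofReal (Δj α β t)) *
                (∫⁻ r in E ∩ {r : ℝ | 1 ≤ |t - r|},
                  ENNReal.ofReal (Real.exp (-q * r) * Δj α β r * |t - r|⁻¹)) ^ 2 := by ring
            _ ≤ ENNReal.ofReal C1 * (∫⁻ r, H t r)^2 := mul_le_mul' h2 h1
      _ ≤ ∫⁻ t, ENNReal.ofReal C1 * (∫⁻ r, H t r)^2 := setLIntegral_le_lintegral _ _
      _ = ENNReal.ofReal C1 * ∫⁻ t, (∫⁻ r, H t r)^2 :=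
          lintegral_const_mul _ (hQm.pow_const 2)
  -- kernel estimates
  have hkk2 : ∀ r : ℝ, ∫⁻ t, (kerF (t - r))^2 ≤ 2 := by
    intro r
    rw [lintegral_sub_right_eq_self (fun u => (kerF u)^2) r]
    exact kerF_sq_lintegral
  have hconv : ∀ r s : ℝ, ∫⁻ t, kerF (t - r) * kerF (t - s) ≤ 4 := by
    intro r s
    have hb : ∀ t, kerF (t-r) * kerF (t-s) ≤ (kerF (t-r))^2 + (kerF (t-s))^2 := by
      intro t
      rcases le_total (kerF (t-r)) (kerF (t-s)) with h | h
      · calc kerF (t-r) * kerF (t-s) ≤ kerF (t-s) * kerF (t-s) := mul_le_mul_left h _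
          _ = (kerF (t-s))^2 := (sq _).symm
          _ ≤ _ := le_add_self
      · calc kerF (t-r) * kerF (t-s) ≤ kerF (t-r) * kerF (t-r) := mul_le_mul_right h _
          _ = (kerF (t-r))^2 := (sq _).symm
          _ ≤ _ := le_self_add
    calc ∫⁻ t, kerF (t-r) * kerF (t-s)
        ≤ ∫⁻ t, ((kerF (t-r))^2 + (kerF (t-s))^2) := lintegral_mono hb
      _ = (∫⁻ t, (kerF (t-r))^2) + ∫⁻ t, (kerF (t-s))^2 :=
          lintegral_add_left ((kerF_meas.comp (measurable_id.sub measurable_const)).pow_const 2) _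
      _ ≤ 2 + 2 := add_le_add (hkk2 r) (hkk2 s)
      _ = 4 := by norm_num
  -- Step 4 : Fubini
  have step4 : ∫⁻ t, (∫⁻ r, H t r)^2 ≤ 4 * (∫⁻ r, g r)^2 := by
    have hmeas1 : Measurable (fun p : ℝ × ℝ => H p.1 p.2 * ∫⁻ s, H p.1 s) :=
      hHm.mul (hQm.comp measurable_fst)
    calc ∫⁻ t, (∫⁻ r, H t r)^2
        = ∫⁻ t, ∫⁻ r, H t r * ∫⁻ s, H t s := by
          apply lintegral_congr
          intro t
          rw [sq, ← lintegral_mul_const _ (hHm1 t)]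
      _ = ∫⁻ r, ∫⁻ t, H t r * ∫⁻ s, H t s :=
          lintegral_lintegral_swap hmeas1.aemeasurable
      _ ≤ ∫⁻ r, g r * ((∫⁻ s, g s) * 4) := by
          apply lintegral_mono
          intro r
          show (∫⁻ t, H t r * ∫⁻ s, H t s) ≤ g r * ((∫⁻ s, g s) * 4)
          have hmeas2 : Measurable (fun p : ℝ × ℝ => H p.1 r * H p.1 p.2) :=
            (hHm.comp (measurable_fst.prodMk measurable_const)).mul hHm
          calc ∫⁻ t, H t r * ∫⁻ s, H t s
              = ∫⁻ t, ∫⁻ s, H t r * H t s := by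
                apply lintegral_congr
                intro t
                rw [lintegral_const_mul' _ _ (hHtop t r)]
            _ = ∫⁻ s, ∫⁻ t, H t r * H t s :=
                lintegral_lintegral_swap hmeas2.aemeasurable
            _ ≤ ∫⁻ s, g r * g s * 4 := by
                apply lintegral_mono
                intro s
                show (∫⁻ t, H t r * H t s) ≤ g r * g s * 4
                calc ∫⁻ t, H t r * H t s
                    = ∫⁻ t, (g r * g s) * (kerF (t-r) * kerF (t-s)) := by
                      apply lintegral_congr
                      intro t
                      simp only [hHdef]
                      ring
                  _ = (g r * g s) * ∫⁻ t, kerF (t-r) * kerF (t-s) :=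
                      lintegral_const_mul' _ _ (ENNReal.mul_ne_top (hgtop r) (hgtop s))
                  _ ≤ (g r * g s) * 4 := mul_le_mul_right (hconv r s) _
            _ = g r * ((∫⁻ s, g s) * 4) := by
                simp_rw [mul_assoc]
                rw [lintegral_const_mul' _ _ (hgtop r), lintegral_mul_const _ hgm]
      _ = 4 * (∫⁻ r, g r)^2 := by
          rw [lintegral_mul_const _ hgm, sq]
          ring
  -- Step 5 : bound ∫ g by μj E
  have step5 : ∫⁻ r, g r ≤ ENNReal.ofReal (C1 * c3) * μj α β E := by
    have hgint : ∫⁻ r, g r = ∫⁻ r in E, ENNReal.ofReal (C1 * Real.exp (q * r)) := by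
      rw [hgdef]
      exact lintegral_indicator hE _
    rw [hgint, μj, withDensity_apply _ hE]
    calc ∫⁻ r in E, ENNReal.ofReal (C1 * Real.exp (q*r))
        ≤ ∫⁻ r in E, ENNReal.ofReal (C1 * c3) * ENNReal.ofReal (Δj α β r) := by
          apply setLIntegral_mono (measurable_const.mul hΔm.ennreal_ofReal)
          intro r hrE
          have hr1 : (1:ℝ) ≤ r := hE1 hrE
          have h1 : Real.exp (q*r) ≤ Real.exp (2*q*r) := Real.exp_le_exp.mpr (by nlinarith)
          have h2 : Real.exp (2*q*r) ≤ c3 * Δj α β r := Delta_lower α β hβα hβ hr1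
          show ENNReal.ofReal (C1 * Real.exp (q*r)) ≤ ENNReal.ofReal (C1 * c3) * ENNReal.ofReal (Δj α β r)
          rw [← ENNReal.ofReal_mul (by positivity)]
          apply ENNReal.ofReal_le_ofReal
          calc C1 * Real.exp (q*r) ≤ C1 * (c3 * Δj α β r) :=
                mul_le_mul_of_nonneg_left (le_trans h1 h2) hC1.le
            _ = C1 * c3 * Δj α β r := by ring
      _ = ENNReal.ofReal (C1 * c3) * ∫⁻ r in E, ENNReal.ofReal (Δj α β r) :=
          lintegral_const_mul _ hΔm.ennreal_ofReal
  -- assemble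
  calc (∫⁻ t in Set.Ici (1 : ℝ),
        ENNReal.ofReal (Real.exp (-2 * q * t)) *
          (∫⁻ r in E ∩ {r : ℝ | 1 ≤ |t - r|},
              ENNReal.ofReal (Real.exp (-q * r) * Δj α β r * |t - r|⁻¹)) ^ 2 *
          ENNReal.ofReal (Δj α β t))
      ≤ ENNReal.ofReal C1 * ∫⁻ t, (∫⁻ r, H t r)^2 := step2
    _ ≤ ENNReal.ofReal C1 * (4 * (∫⁻ r, g r)^2) := mul_le_mul_right step4 _
    _ ≤ ENNReal.ofReal C1 * (4 * (ENNReal.ofReal (C1*c3) * μj α β E)^2) := by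
        exact mul_le_mul_right (mul_le_mul_right (pow_le_pow_left' step5 2) _) _
    _ = ENNReal.ofReal (4 * C1 * (C1*c3)^2) * (μj α β E)^2 := by
        have hco : ENNReal.ofReal (4 * C1 * (C1*c3)^2)
            = ENNReal.ofReal 4 * ENNReal.ofReal C1 * (ENNReal.ofReal (C1*c3))^2 := by
          rw [ENNReal.ofReal_mul (by positivity), ENNReal.ofReal_mul (by norm_num : (0:ℝ) ≤ 4),
            ENNReal.ofReal_pow (by positivity)]
        rw [hco, ENNReal.ofReal_ofNat]
        ring
end

section
/- There exist constants K > 0 and d > 0 such that |Γ_k(λ)| ≤ K · (1 + k)^d for all integers k ≥ 0 and all real λ. -/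
set_option maxHeartbeats 1000000

theorem stmt8 (α β : ℝ) (hβα : β < α) (hβ : -(1/2 : ℝ) < β)
    (G : ℕ → ℝ → ℂ) (h0 : ∀ l : ℝ, G 0 l = 1)
    (hrec : ∀ (k : ℕ) (l : ℝ),
      ((k : ℂ) + 1) * ((k : ℂ) + 1 - Complex.I * l) * G (k + 1) l =
        ((α : ℂ) - (β : ℂ)) *
            ∑ j ∈ Finset.range (k + 1),
              (((α : ℂ) + (β : ℂ) + 1) + 2 * (j : ℂ) - Complex.I * l) * G j l +
          ((β : ℂ) + 1 / 2) *
            ∑ j ∈ Finset.Icc 1 ((k + 1) / 2),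
              (((α : ℂ) + (β : ℂ) + 1) + 2 * ((k + 1 - 2 * j : ℕ) : ℂ) - Complex.I * l) *
                G (k + 1 - 2 * j) l) :
    ∃ K : ℝ, 0 < K ∧ ∃ d : ℝ, 0 < d ∧
      ∀ (k : ℕ) (l : ℝ), ‖G k l‖ ≤ K * ((1 + k : ℝ)) ^ d := by
  set ρ : ℝ := α + β + 1 with hρdef
  have hρ : 0 < ρ := by simp only [hρdef]; linarith
  set A : ℝ := (α - β) + (β + 1/2) with hAdef
  have hA : 0 < A := by simp only [hAdef]; linarith
  set c : ℝ := A * (ρ + 3) with hcdef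
  have hc : 0 < c := by positivity
  set d : ℝ := max c 1 with hddef
  have hd1 : (1:ℝ) ≤ d := le_max_right _ _
  have hcd : c ≤ d := le_max_left _ _
  set S : ℕ → ℝ → ℝ := fun k l => ∑ j ∈ Finset.range (k+1), ‖G j l‖ with hS
  have hSnn : ∀ k l, 0 ≤ S k l := fun k l =>
    Finset.sum_nonneg fun _ _ => norm_nonneg _
  -- key step estimate
  have key : ∀ (k : ℕ) (l : ℝ), ((k:ℝ)+1) * ‖G (k+1) l‖ ≤ c * S k l := by
    intro k l
    have hz1 : (k:ℝ) + 1 ≤ ‖(k : ℂ) + 1 - Complex.I * l‖ := by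
      have h := Complex.abs_re_le_norm ((k : ℂ) + 1 - Complex.I * l)
      have hre : ((k : ℂ) + 1 - Complex.I * l).re = (k:ℝ) + 1 := by simp
      rw [hre] at h
      calc (k:ℝ)+1 ≤ |(k:ℝ)+1| := le_abs_self _
        _ ≤ _ := h
    have hz2 : |l| ≤ ‖(k : ℂ) + 1 - Complex.I * l‖ := by
      have h := Complex.abs_im_le_norm ((k : ℂ) + 1 - Complex.I * l)
      have him : ((k : ℂ) + 1 - Complex.I * l).im = -l := by simp
      rw [him, abs_neg] at h
      exact h
    have hzpos : (0:ℝ) < ‖(k : ℂ) + 1 - Complex.I * l‖ := by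
      have : (0:ℝ) < (k:ℝ) + 1 := by positivity
      linarith
    -- bound on the coefficient norms
    have hcoef : ∀ m : ℕ, m ≤ k →
        ‖((α : ℂ) + (β : ℂ) + 1) + 2 * (m : ℂ) - Complex.I * l‖ ≤ ρ + 2*k + |l| := by
      intro m hm
      have h := Complex.norm_le_abs_re_add_abs_im
        (((α : ℂ) + (β : ℂ) + 1) + 2 * (m : ℂ) - Complex.I * l)
      have hre : (((α : ℂ) + (β : ℂ) + 1) + 2 * (m : ℂ) - Complex.I * l).re
          = ρ + 2*(m:ℝ) := by simp [hρdef]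
      have him : (((α : ℂ) + (β : ℂ) + 1) + 2 * (m : ℂ) - Complex.I * l).im = -l := by simp
      rw [hre, him, abs_neg] at h
      have hm' : (m:ℝ) ≤ (k:ℝ) := Nat.cast_le.mpr hm
      have : |ρ + 2*(m:ℝ)| = ρ + 2*(m:ℝ) := abs_of_nonneg (by positivity)
      rw [this] at h
      calc ‖_‖ ≤ ρ + 2*(m:ℝ) + |l| := h
        _ ≤ ρ + 2*(k:ℝ) + |l| := by linarith
    -- bound first sum
    have hsum1 : ‖∑ j ∈ Finset.range (k + 1),
        (((α : ℂ) + (β : ℂ) + 1) + 2 * (j : ℂ) - Complex.I * l) * G j l‖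
        ≤ (ρ + 2*k + |l|) * S k l := by
      calc ‖∑ j ∈ Finset.range (k + 1),
            (((α : ℂ) + (β : ℂ) + 1) + 2 * (j : ℂ) - Complex.I * l) * G j l‖
          ≤ ∑ j ∈ Finset.range (k + 1),
            ‖(((α : ℂ) + (β : ℂ) + 1) + 2 * (j : ℂ) - Complex.I * l) * G j l‖ :=
          norm_sum_le _ _
        _ ≤ ∑ j ∈ Finset.range (k + 1), (ρ + 2*k + |l|) * ‖G j l‖ := by
          refine Finset.sum_le_sum fun j hj => ?_
          rw [norm_mul]
          exact mul_le_mul_of_nonneg_right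
            (hcoef j (Nat.lt_succ_iff.mp (Finset.mem_range.mp hj))) (norm_nonneg _)
        _ = (ρ + 2*k + |l|) * S k l := by rw [hS, ← Finset.mul_sum]
    -- bound second sum
    have hsub : ∑ j ∈ Finset.Icc 1 ((k+1)/2), ‖G (k + 1 - 2*j) l‖ ≤ S k l := by
      have hinj : ∀ x ∈ Finset.Icc 1 ((k+1)/2), ∀ y ∈ Finset.Icc 1 ((k+1)/2),
          k + 1 - 2*x = k + 1 - 2*y → x = y := by
        intro x hx y hy hxy
        simp only [Finset.mem_Icc] at hx hy
        omega
      have himage : ∑ m ∈ (Finset.Icc 1 ((k+1)/2)).image (fun j => k + 1 - 2*j), ‖G m l‖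
          = ∑ j ∈ Finset.Icc 1 ((k+1)/2), ‖G (k + 1 - 2*j) l‖ := Finset.sum_image hinj
      calc ∑ j ∈ Finset.Icc 1 ((k+1)/2), ‖G (k + 1 - 2*j) l‖
          = ∑ m ∈ (Finset.Icc 1 ((k+1)/2)).image (fun j => k + 1 - 2*j), ‖G m l‖ :=
            himage.symm
        _ ≤ ∑ m ∈ Finset.range (k+1), ‖G m l‖ := by
            refine Finset.sum_le_sum_of_subset_of_nonneg ?_ fun _ _ _ => norm_nonneg _
            intro m hm
            simp only [Finset.mem_image, Finset.mem_Icc] at hm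
            obtain ⟨j, ⟨hj1, hj2⟩, rfl⟩ := hm
            simp only [Finset.mem_range]
            omega
        _ = S k l := rfl
    have hsum2 : ‖∑ j ∈ Finset.Icc 1 ((k+1)/2),
        (((α : ℂ) + (β : ℂ) + 1) + 2 * ((k + 1 - 2 * j : ℕ) : ℂ) - Complex.I * l)
          * G (k + 1 - 2 * j) l‖ ≤ (ρ + 2*k + |l|) * S k l := by
      calc ‖∑ j ∈ Finset.Icc 1 ((k+1)/2),
            (((α : ℂ) + (β : ℂ) + 1) + 2 * ((k + 1 - 2 * j : ℕ) : ℂ) - Complex.I * l)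
              * G (k + 1 - 2 * j) l‖
          ≤ ∑ j ∈ Finset.Icc 1 ((k+1)/2),
            ‖(((α : ℂ) + (β : ℂ) + 1) + 2 * ((k + 1 - 2 * j : ℕ) : ℂ) - Complex.I * l)
              * G (k + 1 - 2 * j) l‖ := norm_sum_le _ _
        _ ≤ ∑ j ∈ Finset.Icc 1 ((k+1)/2), (ρ + 2*k + |l|) * ‖G (k + 1 - 2*j) l‖ := by
            refine Finset.sum_le_sum fun j hj => ?_
            rw [norm_mul]
            refine mul_le_mul_of_nonneg_right (hcoef _ ?_) (norm_nonneg _)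
            simp only [Finset.mem_Icc] at hj
            omega
        _ = (ρ + 2*k + |l|) * ∑ j ∈ Finset.Icc 1 ((k+1)/2), ‖G (k + 1 - 2*j) l‖ :=
            (Finset.mul_sum _ _ _).symm
        _ ≤ (ρ + 2*k + |l|) * S k l := by
            refine mul_le_mul_of_nonneg_left hsub ?_
            have : (0:ℝ) ≤ (k:ℝ) := Nat.cast_nonneg k
            have := abs_nonneg l
            linarith
    -- combine
    have hn := congrArg norm (hrec k l)
    have hL : ‖((k : ℂ) + 1) * ((k : ℂ) + 1 - Complex.I * l) * G (k + 1) l‖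
        = ((k:ℝ)+1) * ‖(k : ℂ) + 1 - Complex.I * l‖ * ‖G (k+1) l‖ := by
      rw [norm_mul, norm_mul]
      congr 2
      rw [show ((k:ℂ)+1) = ((k+1:ℕ):ℂ) by push_cast; ring, Complex.norm_natCast]
      push_cast; ring
    rw [hL] at hn
    have hcoefs1 : ‖((α : ℂ) - (β : ℂ))‖ = α - β := by
      rw [show ((α:ℂ) - (β:ℂ)) = ((α - β : ℝ):ℂ) by push_cast; ring, Complex.norm_real, Real.norm_eq_abs,
        abs_of_nonneg (by linarith)]
    have hcoefs2 : ‖((β : ℂ) + 1/2)‖ = β + 1/2 := by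
      rw [show ((β:ℂ) + 1/2) = ((β + 1/2 : ℝ):ℂ) by push_cast; ring, Complex.norm_real, Real.norm_eq_abs,
        abs_of_nonneg (by linarith)]
    have hR : ((k:ℝ)+1) * ‖(k : ℂ) + 1 - Complex.I * l‖ * ‖G (k+1) l‖
        ≤ A * ((ρ + 2*k + |l|) * S k l) := by
      rw [hn]
      calc ‖_ + _‖ ≤ ‖((α : ℂ) - (β : ℂ)) *
            ∑ j ∈ Finset.range (k + 1),
              (((α : ℂ) + (β : ℂ) + 1) + 2 * (j : ℂ) - Complex.I * l) * G j l‖ +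
            ‖((β : ℂ) + 1 / 2) *
            ∑ j ∈ Finset.Icc 1 ((k + 1) / 2),
              (((α : ℂ) + (β : ℂ) + 1) + 2 * ((k + 1 - 2 * j : ℕ) : ℂ) - Complex.I * l) *
                G (k + 1 - 2 * j) l‖ := norm_add_le _ _
        _ ≤ (α - β) * ((ρ + 2*k + |l|) * S k l) + (β + 1/2) * ((ρ + 2*k + |l|) * S k l) := by
            rw [norm_mul, norm_mul, hcoefs1, hcoefs2]
            exact add_le_add
              (mul_le_mul_of_nonneg_left hsum1 (by linarith))
              (mul_le_mul_of_nonneg_left hsum2 (by linarith))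
        _ = A * ((ρ + 2*k + |l|) * S k l) := by rw [hAdef]; ring
    -- ρ + 2k + |l| ≤ (ρ+3) ‖z‖
    have hest : ρ + 2*(k:ℝ) + |l| ≤ (ρ + 3) * ‖(k : ℂ) + 1 - Complex.I * l‖ := by
      have h1 : ρ + 2*(k:ℝ) ≤ (ρ + 2) * ((k:ℝ)+1) := by nlinarith [Nat.cast_nonneg (α := ℝ) k]
      have h2 : (ρ + 2) * ((k:ℝ)+1) ≤ (ρ + 2) * ‖(k : ℂ) + 1 - Complex.I * l‖ :=
        mul_le_mul_of_nonneg_left hz1 (by linarith)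
      nlinarith
    have hfin : ((k:ℝ)+1) * ‖(k : ℂ) + 1 - Complex.I * l‖ * ‖G (k+1) l‖
        ≤ (c * S k l) * ‖(k : ℂ) + 1 - Complex.I * l‖ := by
      calc ((k:ℝ)+1) * ‖(k : ℂ) + 1 - Complex.I * l‖ * ‖G (k+1) l‖
          ≤ A * ((ρ + 2*k + |l|) * S k l) := hR
        _ ≤ A * (((ρ + 3) * ‖(k : ℂ) + 1 - Complex.I * l‖) * S k l) := by
            refine mul_le_mul_of_nonneg_left (mul_le_mul_of_nonneg_right hest (hSnn k l))
              (le_of_lt hA)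
        _ = (c * S k l) * ‖(k : ℂ) + 1 - Complex.I * l‖ := by rw [hcdef]; ring
    have := le_of_mul_le_mul_right
      (by calc ((k:ℝ)+1) * ‖G (k+1) l‖ * ‖(k : ℂ) + 1 - Complex.I * l‖
            = ((k:ℝ)+1) * ‖(k : ℂ) + 1 - Complex.I * l‖ * ‖G (k+1) l‖ := by ring
          _ ≤ (c * S k l) * ‖(k : ℂ) + 1 - Complex.I * l‖ := hfin) hzpos
    exact this
  -- inductive polynomial bound on S
  have hSb : ∀ (k : ℕ) (l : ℝ), S k l ≤ ((1:ℝ) + k) ^ d := by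
    intro k
    induction k with
    | zero =>
      intro l
      have : S 0 l = 1 := by simp [hS, h0]
      rw [this]
      norm_num
    | succ n ih =>
      intro l
      have hn1 : (0:ℝ) < (n:ℝ) + 1 := by positivity
      have hGb : ‖G (n+1) l‖ ≤ c * S n l / ((n:ℝ)+1) := by
        rw [le_div_iff₀ hn1]
        calc ‖G (n+1) l‖ * ((n:ℝ)+1) = ((n:ℝ)+1) * ‖G (n+1) l‖ := by ring
          _ ≤ c * S n l := key n l
      have hrw : S (n+1) l = S n l + ‖G (n+1) l‖ := Finset.sum_range_succ _ _
      have hbern : (1:ℝ) + d * (1/((n:ℝ)+1)) ≤ (1 + 1/((n:ℝ)+1)) ^ d :=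
        one_add_mul_self_le_rpow_one_add (le_trans (by norm_num : (-1:ℝ) ≤ 0) (by positivity)) hd1
      have hmul : ((1:ℝ) + n) ^ d * (1 + 1/((n:ℝ)+1)) ^ d = ((1:ℝ) + (n+1:ℕ)) ^ d := by
        rw [← Real.mul_rpow (by positivity) (by positivity)]
        congr 1
        have hne : ((n:ℝ)+1) ≠ 0 := ne_of_gt hn1
        push_cast
        field_simp
        ring
      calc S (n+1) l = S n l + ‖G (n+1) l‖ := hrw
        _ ≤ S n l + c * S n l / ((n:ℝ)+1) := by linarith [hGb]
        _ = S n l * (1 + c * (1/((n:ℝ)+1))) := by field_simp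
        _ ≤ ((1:ℝ) + n) ^ d * (1 + d * (1/((n:ℝ)+1))) := by
            refine mul_le_mul (ih l) ?_ ?_ (Real.rpow_nonneg (by positivity) d)
            · have h1 : (0:ℝ) < 1/((n:ℝ)+1) := by positivity
              nlinarith
            · positivity
        _ ≤ ((1:ℝ) + n) ^ d * (1 + 1/((n:ℝ)+1)) ^ d := by
            exact mul_le_mul_of_nonneg_left hbern (Real.rpow_nonneg (by positivity) d)
        _ = ((1:ℝ) + (n+1:ℕ)) ^ d := hmul
  refine ⟨1, one_pos, d, lt_of_lt_of_le one_pos hd1, ?_⟩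
  intro k l
  rw [one_mul]
  calc ‖G k l‖ ≤ S k l :=
      Finset.single_le_sum (fun j _ => norm_nonneg (G j l)) (Finset.self_mem_range_succ k)
    _ ≤ ((1:ℝ) + k) ^ d := hSb k l
end

section
/- For every c > 0 there exists a constant C > 0 such that Σ_{k=0}^∞ |Γ_k(λ)| e^{−2kt} ≤ C for all real λ and all t ≥ c; in particular the Harish-Chandra series Σ_{k=0}^∞ Γ_k(λ) e^{−2kt} converges absolutely, with a bound uniform in λ ∈ ℝ and t ≥ c. -/
open Finset

noncomputable def Pfun (c' : ℝ) : ℕ → ℝ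
  | 0 => 1
  | (k+1) => Pfun c' k * (1 + c' / (k+1))

lemma Pfun_zero (c' : ℝ) : Pfun c' 0 = 1 := by rw [Pfun]
lemma Pfun_succ (c' : ℝ) (k : ℕ) : Pfun c' (k+1) = Pfun c' k * (1 + c' / ((k:ℝ)+1)) := by
  rw [Pfun]

lemma norm_real_abs (r : ℝ) : ‖(r:ℂ)‖ = |r| := by
  rw [Complex.norm_real, Real.norm_eq_abs]

theorem stmt9 (α β : ℝ) (hβα : β < α) (hβ : -(1/2 : ℝ) < β)
    (G : ℕ → ℝ → ℂ) (h0 : ∀ l : ℝ, G 0 l = 1)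
    (hrec : ∀ (k : ℕ) (l : ℝ),
      ((k : ℂ) + 1) * ((k : ℂ) + 1 - Complex.I * l) * G (k + 1) l =
        ((α : ℂ) - (β : ℂ)) *
            ∑ j ∈ Finset.range (k + 1),
              (((α : ℂ) + (β : ℂ) + 1) + 2 * (j : ℂ) - Complex.I * l) * G j l +
          ((β : ℂ) + 1 / 2) *
            ∑ j ∈ Finset.Icc 1 ((k + 1) / 2),
              (((α : ℂ) + (β : ℂ) + 1) + 2 * ((k + 1 - 2 * j : ℕ) : ℂ) - Complex.I * l) *
                G (k + 1 - 2 * j) l) :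
    ∀ c : ℝ, 0 < c → ∃ C : ℝ, 0 < C ∧
      ∀ (l : ℝ) (t : ℝ), c ≤ t →
        Summable (fun k : ℕ => ‖G k l‖ * Real.exp (-2 * k * t)) ∧
          ∑' k : ℕ, ‖G k l‖ * Real.exp (-2 * k * t) ≤ C := by
  intro c hc
  set M : ℝ := |α + β + 1| + 3 with hM
  set B : ℝ := (α - β) + (β + 1/2) with hBdef
  set c' : ℝ := M * B with hc'def
  have hMpos : (0:ℝ) < M := by rw [hM]; positivity
  have hBpos : (0:ℝ) < B := by rw [hBdef]; linarith
  have hc'pos : 0 < c' := mul_pos hMpos hBpos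
  clear_value M B c'
  -- partial sums of norms bounded by Pfun
  have hSP : ∀ (l : ℝ) (k : ℕ), (∑ j ∈ range (k+1), ‖G j l‖) ≤ Pfun c' k := by
    intro l k
    induction k with
    | zero => simp [h0, Pfun_zero]
    | succ k ih =>
      set S : ℝ := ∑ j ∈ range (k+1), ‖G j l‖ with hS
      set W : ℝ := ‖((k:ℂ) + 1 - Complex.I * (l:ℂ))‖ with hW
      have hre : ((k:ℂ) + 1 - Complex.I * (l:ℂ)).re = (k:ℝ) + 1 := by simp
      have him : ((k:ℂ) + 1 - Complex.I * (l:ℂ)).im = -l := by simp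
      have hknn : (0:ℝ) ≤ (k:ℝ) := Nat.cast_nonneg k
      have hk1pos : (0:ℝ) < (k:ℝ) + 1 := by linarith
      have hW1 : ((k:ℝ)+1) ≤ W := by
        have h := Complex.abs_re_le_norm ((k:ℂ) + 1 - Complex.I * (l:ℂ))
        rw [hre] at h
        rw [hW]
        exact le_trans (le_abs_self _) h
      have hWl : |l| ≤ W := by
        have h := Complex.abs_im_le_norm ((k:ℂ) + 1 - Complex.I * (l:ℂ))
        rw [him, abs_neg] at h
        rw [hW]; exact h
      have hWpos : 0 < W := lt_of_lt_of_le hk1pos hW1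
      have hWge1 : (1:ℝ) ≤ W := by linarith
      -- coefficient bound
      have hcoef : ∀ m : ℕ, m ≤ k →
          ‖(((α:ℂ) + (β:ℂ) + 1) + 2 * (m:ℂ) - Complex.I * (l:ℂ))‖ ≤ M * W := by
        intro m hm
        have heq : (((α:ℂ) + (β:ℂ) + 1) + 2 * (m:ℂ) - Complex.I * (l:ℂ))
            = (((α + β + 1 + 2*m : ℝ) : ℂ)) - Complex.I * (l:ℂ) := by
          push_cast; ring
        rw [heq]
        have h1 : ‖(((α + β + 1 + 2*m : ℝ) : ℂ)) - Complex.I * (l:ℂ)‖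
            ≤ |α + β + 1 + 2*(m:ℝ)| + |l| := by
          refine le_trans (norm_sub_le _ _) ?_
          rw [norm_real_abs, norm_mul, Complex.norm_I, one_mul, norm_real_abs]
        have h2 : |α + β + 1 + 2*(m:ℝ)| ≤ |α + β + 1| + 2*(m:ℝ) := by
          have h3 := abs_add_le (α + β + 1) (2*(m:ℝ))
          have hmn : |2*(m:ℝ)| = 2*(m:ℝ) := abs_of_nonneg (by positivity)
          linarith
        have hmk : (m:ℝ) ≤ (k:ℝ) := by exact_mod_cast hm
        have habs : 0 ≤ |α + β + 1| := abs_nonneg _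
        rw [hM]
        nlinarith [hW1, hWl, hWge1]
      -- first sum bound
      have hsum1 : ‖∑ j ∈ range (k+1),
          (((α:ℂ) + (β:ℂ) + 1) + 2 * (j:ℂ) - Complex.I * (l:ℂ)) * G j l‖ ≤ M * W * S := by
        refine le_trans (norm_sum_le _ _) ?_
        rw [hS, Finset.mul_sum]
        apply Finset.sum_le_sum
        intro j hj
        rw [norm_mul]
        exact mul_le_mul_of_nonneg_right
          (hcoef j (by simpa [Nat.lt_succ_iff] using hj)) (norm_nonneg _)
      -- second sum bound
      have hsub : ∑ j ∈ Finset.Icc 1 ((k+1)/2), ‖G (k+1-2*j) l‖ ≤ S := by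
        have hinj : ∀ x ∈ Finset.Icc 1 ((k+1)/2), ∀ y ∈ Finset.Icc 1 ((k+1)/2),
            k+1-2*x = k+1-2*y → x = y := by
          intro x hx y hy h
          simp only [Finset.mem_Icc] at hx hy
          omega
        calc ∑ j ∈ Finset.Icc 1 ((k+1)/2), ‖G (k+1-2*j) l‖
            = ∑ m ∈ (Finset.Icc 1 ((k+1)/2)).image (fun j => k+1-2*j), ‖G m l‖ :=
              (Finset.sum_image (f := fun m => ‖G m l‖) hinj).symm
          _ ≤ ∑ m ∈ range (k+1), ‖G m l‖ := by
              apply Finset.sum_le_sum_of_subset_of_nonneg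
              · intro m hm
                simp only [Finset.mem_image, Finset.mem_Icc] at hm
                simp only [Finset.mem_range]
                omega
              · intro _ _ _; exact norm_nonneg _
      have hsum2 : ‖∑ j ∈ Finset.Icc 1 ((k+1)/2),
          (((α:ℂ) + (β:ℂ) + 1) + 2 * ((k + 1 - 2 * j : ℕ) : ℂ) - Complex.I * (l:ℂ))
            * G (k + 1 - 2 * j) l‖ ≤ M * W * S := by
        refine le_trans (norm_sum_le _ _) ?_
        have step : ∑ j ∈ Finset.Icc 1 ((k+1)/2),
            ‖(((α:ℂ) + (β:ℂ) + 1) + 2 * ((k + 1 - 2 * j : ℕ) : ℂ) - Complex.I * (l:ℂ))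
              * G (k + 1 - 2 * j) l‖
            ≤ ∑ j ∈ Finset.Icc 1 ((k+1)/2), (M * W) * ‖G (k+1-2*j) l‖ := by
          apply Finset.sum_le_sum
          intro j hj
          rw [norm_mul]
          refine mul_le_mul_of_nonneg_right (hcoef _ ?_) (norm_nonneg _)
          simp only [Finset.mem_Icc] at hj
          omega
        refine le_trans step ?_
        rw [← Finset.mul_sum]
        exact mul_le_mul_of_nonneg_left hsub (by positivity)
      -- norms of scalar factors
      have hnk : ‖((k:ℂ) + 1)‖ = (k:ℝ)+1 := by
        rw [show ((k:ℂ)+1) = (((k:ℝ)+1 : ℝ):ℂ) by push_cast; ring, norm_real_abs,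
          abs_of_nonneg (by linarith)]
      have hnab : ‖((α:ℂ) - (β:ℂ))‖ = α - β := by
        rw [show ((α:ℂ) - (β:ℂ)) = ((α - β : ℝ):ℂ) by push_cast; ring, norm_real_abs,
          abs_of_nonneg (by linarith)]
      have hnb : ‖((β:ℂ) + 1/2)‖ = β + 1/2 := by
        rw [show ((β:ℂ) + 1/2) = ((β + 1/2 : ℝ):ℂ) by push_cast; ring, norm_real_abs,
          abs_of_nonneg (by linarith)]
      have hSnonneg : 0 ≤ S := Finset.sum_nonneg (fun _ _ => norm_nonneg _)
      have hLHS : ‖((k:ℂ) + 1) * ((k:ℂ) + 1 - Complex.I * (l:ℂ)) * G (k + 1) l‖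
          = ((k:ℝ)+1) * W * ‖G (k+1) l‖ := by
        rw [norm_mul, norm_mul, hnk, hW]
      have hmain : ((k:ℝ)+1) * W * ‖G (k+1) l‖ ≤ c' * W * S := by
        rw [← hLHS, hrec k l]
        refine le_trans (norm_add_le _ _) ?_
        rw [norm_mul, norm_mul, hnab, hnb]
        have h1 := mul_le_mul_of_nonneg_left hsum1 (by linarith : (0:ℝ) ≤ α - β)
        have h2 := mul_le_mul_of_nonneg_left hsum2 (by linarith : (0:ℝ) ≤ β + 1/2)
        have heq2 : c' * W * S = (α - β) * (M * W * S) + (β + 1/2) * (M * W * S) := by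
          rw [hc'def, hBdef]; ring
        exact heq2 ▸ add_le_add h1 h2
      have hGk1 : ‖G (k+1) l‖ ≤ c' / ((k:ℝ)+1) * S := by
        have h1 : ((k:ℝ)+1) * ‖G (k+1) l‖ ≤ c' * S := by
          nlinarith [norm_nonneg (G (k+1) l), hWpos, hmain]
        rw [div_mul_eq_mul_div, le_div_iff₀ hk1pos]
        linarith
      have hPk : 0 ≤ Pfun c' k := le_trans hSnonneg ih
      calc ∑ j ∈ range (k+1+1), ‖G j l‖ = S + ‖G (k+1) l‖ := by
            rw [hS, Finset.sum_range_succ]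
        _ ≤ Pfun c' k + c' / ((k:ℝ)+1) * Pfun c' k := by
            have h3 : c' / ((k:ℝ)+1) * S ≤ c' / ((k:ℝ)+1) * Pfun c' k :=
              mul_le_mul_of_nonneg_left ih (by positivity)
            linarith
        _ = Pfun c' (k+1) := by rw [Pfun_succ]; ring
  have hGP : ∀ (l : ℝ) (k : ℕ), ‖G k l‖ ≤ Pfun c' k := by
    intro l k
    refine le_trans ?_ (hSP l k)
    exact Finset.single_le_sum (fun j _ => norm_nonneg (G j l)) (Finset.self_mem_range_succ k)
  have hP1 : ∀ k, (1:ℝ) ≤ Pfun c' k := by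
    intro k
    induction k with
    | zero => rw [Pfun_zero]
    | succ k ih =>
      rw [Pfun_succ]
      have h : (0:ℝ) ≤ c' / ((k:ℝ)+1) := by positivity
      calc (1:ℝ) = 1 * 1 := by ring
        _ ≤ Pfun c' k * (1 + c' / ((k:ℝ)+1)) :=
            mul_le_mul ih (by linarith) (by norm_num) (by linarith)
  -- summability of the dominating series
  have hfpos : ∀ k : ℕ, 0 < Pfun c' k * Real.exp (-2 * k * c) :=
    fun k => mul_pos (lt_of_lt_of_le one_pos (hP1 k)) (Real.exp_pos _)
  have hec : (1:ℝ) < Real.exp c := by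
    rw [← Real.exp_zero]; exact Real.exp_lt_exp.mpr hc
  have hsumf : Summable (fun k : ℕ => Pfun c' k * Real.exp (-2 * k * c)) := by
    apply summable_of_ratio_norm_eventually_le (r := Real.exp (-c))
    · rw [← Real.exp_zero]; exact Real.exp_lt_exp.mpr (by linarith)
    · rw [Filter.eventually_atTop]
      refine ⟨⌈c' / (Real.exp c - 1)⌉₊, fun k hk => ?_⟩
      have hk' : c' / (Real.exp c - 1) ≤ (k:ℝ) := le_trans (Nat.le_ceil _) (by exact_mod_cast hk)
      have hecm : (0:ℝ) < Real.exp c - 1 := by linarith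
      have hk1pos : (0:ℝ) < (k:ℝ)+1 := by positivity
      have h2 : 1 + c' / ((k:ℝ)+1) ≤ Real.exp c := by
        rw [div_le_iff₀ hecm] at hk'
        have : c' / ((k:ℝ)+1) ≤ Real.exp c - 1 := by
          rw [div_le_iff₀ hk1pos]
          nlinarith
        linarith
      rw [Real.norm_eq_abs, Real.norm_eq_abs, abs_of_pos (hfpos _), abs_of_pos (hfpos _)]
      have hexp : Real.exp (-2 * ((k+1 : ℕ):ℝ) * c)
          = Real.exp (-2 * (k:ℝ) * c) * Real.exp (-2*c) := by
        rw [← Real.exp_add]; congr 1; push_cast; ring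
      have hee : Real.exp c * Real.exp (-2*c) = Real.exp (-c) := by
        rw [← Real.exp_add]; congr 1; ring
      have hP0 : (0:ℝ) ≤ Pfun c' k := le_trans one_pos.le (hP1 k)
      calc Pfun c' (k+1) * Real.exp (-2 * ((k+1 : ℕ):ℝ) * c)
          = Pfun c' k * (1 + c' / ((k:ℝ)+1))
            * (Real.exp (-2 * (k:ℝ) * c) * Real.exp (-2*c)) := by
            rw [Pfun_succ, hexp]
        _ ≤ Pfun c' k * Real.exp c * (Real.exp (-2 * (k:ℝ) * c) * Real.exp (-2*c)) := by
            refine mul_le_mul_of_nonneg_right ?_ (by positivity)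
            exact mul_le_mul_of_nonneg_left h2 hP0
        _ = Real.exp (-c) * (Pfun c' k * Real.exp (-2 * (k:ℝ) * c)) := by
            rw [← hee]; ring
  refine ⟨∑' k : ℕ, Pfun c' k * Real.exp (-2 * k * c), ?_, ?_⟩
  · have h0' : (1:ℝ) ≤ Pfun c' 0 * Real.exp (-2 * (0:ℕ) * c) := by
      rw [Pfun_zero]; norm_num
    have hle := Summable.le_tsum hsumf 0 (fun i _ => (hfpos i).le)
    linarith
  · intro l t ht
    have hterm : ∀ k : ℕ, ‖G k l‖ * Real.exp (-2 * k * t)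
        ≤ Pfun c' k * Real.exp (-2 * k * c) := by
      intro k
      apply mul_le_mul (hGP l k)
      · apply Real.exp_le_exp.mpr
        have hk0 : (0:ℝ) ≤ (k:ℝ) := Nat.cast_nonneg k
        nlinarith
      · positivity
      · exact le_trans one_pos.le (hP1 k)
    have hs : Summable (fun k : ℕ => ‖G k l‖ * Real.exp (-2 * k * t)) :=
      Summable.of_nonneg_of_le (fun k => by positivity) hterm hsumf
    exact ⟨hs, Summable.tsum_le_tsum hterm hs hsumf⟩
end

section
/- Let 1 < p < ∞ and define, for measurable f on (0,1], the operator T f(t) = t^{−(α+1/2)} ∫₀^1 r^{−(α+1/2)} |f(r)| Δ(r) dr for t ∈ (0,1]. Then there exists a constant C > 0 with ‖T f‖_{L^p((0,1],dμ)} ≤ C ‖f‖_{L^p((0,1],dμ)} for all f ∈ L^p((0,1],dμ) if and only if p₀ < p < p₁. -/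
open MeasureTheory Real Set
open scoped ENNReal NNReal

lemma jac_meas (α β : ℝ) : Measurable (Δj α β) := by
  unfold Δj
  exact ((measurable_const.mul Real.measurable_sinh).pow measurable_const).mul
    ((measurable_const.mul Real.measurable_cosh).pow measurable_const)

lemma jac_pos (α β : ℝ) {t : ℝ} (ht : 0 < t) : 0 < Δj α β t := by
  have h1 : 0 < Real.sinh t := Real.sinh_pos_iff.mpr ht
  have h2 : 0 < Real.cosh t := Real.cosh_pos t
  exact mul_pos (Real.rpow_pos_of_pos (by linarith) _) (Real.rpow_pos_of_pos (by linarith) _)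

lemma sinh_le_exp_mul {t : ℝ} (ht : 0 < t) (ht1 : t ≤ 1) : Real.sinh t ≤ Real.exp 1 * t := by
  rw [Real.sinh_eq]
  have h1 : Real.exp (-t) = Real.exp t * Real.exp (-(2*t)) := by
    rw [← Real.exp_add]; ring_nf
  have h2 : 1 - 2*t ≤ Real.exp (-(2*t)) := by
    have := Real.add_one_le_exp (-(2*t)); linarith
  have h3 : Real.exp t - Real.exp (-t) = Real.exp t * (1 - Real.exp (-(2*t))) := by
    rw [h1]; ring
  have h4 : Real.exp t * (1 - Real.exp (-(2*t))) ≤ Real.exp t * (2*t) := by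
    apply mul_le_mul_of_nonneg_left (by linarith) (Real.exp_pos t).le
  have h5 : Real.exp t ≤ Real.exp 1 := Real.exp_le_exp.mpr ht1
  nlinarith [Real.exp_pos t, Real.exp_pos 1]

lemma jac_le (α β : ℝ) (hα : -(1/2:ℝ) < α) (hβ : -(1/2:ℝ) < β) {t : ℝ} (ht : t ∈ Ioc (0:ℝ) 1) :
    Δj α β t ≤ ((2*Real.exp 1)^(2*α+1) * (2*Real.cosh 1)^(2*β+1)) * t^(2*α+1) := by
  obtain ⟨ht0, ht1⟩ := ht
  have hs : 0 < Real.sinh t := Real.sinh_pos_iff.mpr ht0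
  have hct : 0 < Real.cosh t := Real.cosh_pos t
  have h1 : (2 * Real.sinh t) ^ (2*α+1) ≤ (2 * Real.exp 1 * t) ^ (2*α+1) := by
    apply Real.rpow_le_rpow (by nlinarith) (by nlinarith [sinh_le_exp_mul ht0 ht1]) (by linarith)
  have h2 : (2 * Real.cosh t) ^ (2*β+1) ≤ (2 * Real.cosh 1) ^ (2*β+1) := by
    apply Real.rpow_le_rpow (by linarith)
      (by
        have : Real.cosh t ≤ Real.cosh 1 := by
          rw [Real.cosh_le_cosh, abs_of_pos ht0, abs_one]; exact ht1
        linarith) (by linarith)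
  have h3 : (2 * Real.exp 1 * t) ^ (2*α+1) = (2*Real.exp 1)^(2*α+1) * t^(2*α+1) :=
    Real.mul_rpow (by positivity) ht0.le
  unfold Δj
  have hc : 0 ≤ (2 * Real.cosh t) ^ (2*β+1) := Real.rpow_nonneg (by nlinarith) _
  calc (2 * Real.sinh t) ^ (2*α+1) * (2 * Real.cosh t) ^ (2*β+1)
      ≤ (2 * Real.exp 1 * t) ^ (2*α+1) * (2 * Real.cosh 1) ^ (2*β+1) := by
        apply mul_le_mul h1 h2 hc (by positivity)
    _ = ((2*Real.exp 1)^(2*α+1) * (2*Real.cosh 1)^(2*β+1)) * t^(2*α+1) := by rw [h3]; ring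

lemma le_jac (α β : ℝ) (hα : -(1/2:ℝ) < α) (hβ : -(1/2:ℝ) < β) {t : ℝ} (ht : t ∈ Ioc (0:ℝ) 1) :
    ((2:ℝ)^(2*α+1) * 2^(2*β+1)) * t^(2*α+1) ≤ Δj α β t := by
  obtain ⟨ht0, ht1⟩ := ht
  have h1 : (2 * t) ^ (2*α+1) ≤ (2 * Real.sinh t) ^ (2*α+1) := by
    apply Real.rpow_le_rpow (by positivity)
      (by nlinarith [(Real.self_lt_sinh_iff.mpr ht0).le]) (by linarith)
  have h2 : (2:ℝ) ^ (2*β+1) ≤ (2 * Real.cosh t) ^ (2*β+1) := by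
    apply Real.rpow_le_rpow (by norm_num) (by nlinarith [Real.one_le_cosh t]) (by linarith)
  have h3 : (2 * t) ^ (2*α+1) = (2:ℝ)^(2*α+1) * t^(2*α+1) := Real.mul_rpow (by norm_num) ht0.le
  unfold Δj
  calc ((2:ℝ)^(2*α+1) * 2^(2*β+1)) * t^(2*α+1) = (2*t)^(2*α+1) * 2^(2*β+1) := by rw [h3]; ring
    _ ≤ (2 * Real.sinh t) ^ (2*α+1) * (2 * Real.cosh t) ^ (2*β+1) :=
        mul_le_mul h1 h2 (by positivity) (by positivity)

lemma lint_rpow_ne_top_iff {τ : ℝ} :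
    (∫⁻ t in Ioc (0:ℝ) 1, ENNReal.ofReal (t ^ τ)) ≠ ⊤ ↔ -1 < τ := by
  rw [← setLIntegral_congr (Ioo_ae_eq_Ioc (a := (0:ℝ)) (b := (1:ℝ)) (μ := volume))]
  rw [lintegral_ofReal_ne_top_iff_integrable
    ((measurable_id'.pow measurable_const : Measurable fun t : ℝ => t ^ τ).aestronglyMeasurable)
    (by filter_upwards [ae_restrict_mem measurableSet_Ioo] with t ht
        exact Real.rpow_nonneg ht.1.le τ)]
  exact intervalIntegral.integrableOn_Ioo_rpow_iff one_pos

lemma muj_setLIntegral (α β : ℝ) {F : ℝ → ℝ≥0∞} (hF : Measurable F) {S : Set ℝ}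
    (hS : MeasurableSet S) :
    ∫⁻ t in S, F t ∂(μj α β) = ∫⁻ t in S, ENNReal.ofReal (Δj α β t) * F t := by
  unfold μj
  exact setLIntegral_withDensity_eq_setLIntegral_mul volume ((jac_meas α β).ennreal_ofReal) hF hS

lemma K_ne_top (α β : ℝ) (hα : -(1/2:ℝ) < α) (hβ : -(1/2:ℝ) < β) {σ : ℝ}
    (hcond : -1 < σ + (2*α+1)) :
    (∫⁻ t in Ioc (0:ℝ) 1, ENNReal.ofReal (t ^ σ) ∂(μj α β)) ≠ ⊤ := by
  rw [muj_setLIntegral α β ((measurable_id'.pow measurable_const).ennreal_ofReal)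
    measurableSet_Ioc]
  set cu : ℝ := (2*Real.exp 1)^(2*α+1) * (2*Real.cosh 1)^(2*β+1) with hcu
  have hbound : (∫⁻ t in Ioc (0:ℝ) 1, ENNReal.ofReal (Δj α β t) * ENNReal.ofReal (t ^ σ))
      ≤ ∫⁻ t in Ioc (0:ℝ) 1, ENNReal.ofReal cu * ENNReal.ofReal (t ^ ((2*α+1) + σ)) := by
    apply setLIntegral_mono
      (measurable_const.mul ((measurable_id'.pow measurable_const).ennreal_ofReal))
    intro t ht
    have h1 := jac_le α β hα hβ ht
    have h2 : (0:ℝ) ≤ t ^ σ := Real.rpow_nonneg ht.1.le σ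
    have h3 : t ^ (2*α+1) * t ^ σ = t ^ ((2*α+1) + σ) := (Real.rpow_add ht.1 _ _).symm
    have hcu0 : (0:ℝ) ≤ cu := by rw [hcu]; positivity
    calc ENNReal.ofReal (Δj α β t) * ENNReal.ofReal (t ^ σ)
        = ENNReal.ofReal (Δj α β t * t ^ σ) :=
          (ENNReal.ofReal_mul (jac_pos α β ht.1).le).symm
      _ ≤ ENNReal.ofReal (cu * t ^ ((2*α+1) + σ)) := by
          apply ENNReal.ofReal_le_ofReal
          calc Δj α β t * t ^ σ ≤ (cu * t ^ (2*α+1)) * t ^ σ := mul_le_mul_of_nonneg_right h1 h2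
            _ = cu * (t ^ ((2*α+1) + σ)) := by rw [← h3]; ring
      _ = ENNReal.ofReal cu * ENNReal.ofReal (t ^ ((2*α+1) + σ)) := ENNReal.ofReal_mul hcu0
  intro htop
  rw [htop] at hbound
  rw [lintegral_const_mul _ ((measurable_id'.pow measurable_const).ennreal_ofReal)] at hbound
  have hfin : (∫⁻ t in Ioc (0:ℝ) 1, ENNReal.ofReal (t ^ ((2*α+1) + σ))) ≠ ⊤ :=
    lint_rpow_ne_top_iff.mpr (by linarith)
  exact absurd (top_le_iff.mp hbound) (ENNReal.mul_ne_top ENNReal.ofReal_ne_top hfin)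

lemma K_eq_top (α β : ℝ) (hα : -(1/2:ℝ) < α) (hβ : -(1/2:ℝ) < β) {σ : ℝ}
    (hcond : σ + (2*α+1) ≤ -1) :
    (∫⁻ t in Ioc (0:ℝ) 1, ENNReal.ofReal (t ^ σ) ∂(μj α β)) = ⊤ := by
  rw [muj_setLIntegral α β ((measurable_id'.pow measurable_const).ennreal_ofReal)
    measurableSet_Ioc]
  set cl : ℝ := (2:ℝ)^(2*α+1) * 2^(2*β+1) with hcl
  have hcl0 : 0 < cl := by positivity
  have hbound : (∫⁻ t in Ioc (0:ℝ) 1, ENNReal.ofReal cl * ENNReal.ofReal (t ^ ((2*α+1) + σ)))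
      ≤ ∫⁻ t in Ioc (0:ℝ) 1, ENNReal.ofReal (Δj α β t) * ENNReal.ofReal (t ^ σ) := by
    apply setLIntegral_mono
      (((jac_meas α β).ennreal_ofReal).mul ((measurable_id'.pow measurable_const).ennreal_ofReal))
    intro t ht
    have h1 := le_jac α β hα hβ ht
    have h2 : (0:ℝ) ≤ t ^ σ := Real.rpow_nonneg ht.1.le σ
    have h3 : t ^ (2*α+1) * t ^ σ = t ^ ((2*α+1) + σ) := (Real.rpow_add ht.1 _ _).symm
    calc ENNReal.ofReal cl * ENNReal.ofReal (t ^ ((2*α+1) + σ))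
        = ENNReal.ofReal (cl * t ^ ((2*α+1) + σ)) := (ENNReal.ofReal_mul hcl0.le).symm
      _ ≤ ENNReal.ofReal (Δj α β t * t ^ σ) := by
          apply ENNReal.ofReal_le_ofReal
          calc cl * t ^ ((2*α+1) + σ) = (cl * t ^ (2*α+1)) * t ^ σ := by rw [← h3]; ring
            _ ≤ Δj α β t * t ^ σ := mul_le_mul_of_nonneg_right h1 h2
      _ = ENNReal.ofReal (Δj α β t) * ENNReal.ofReal (t ^ σ) :=
          ENNReal.ofReal_mul (jac_pos α β ht.1).le
  rw [lintegral_const_mul _ ((measurable_id'.pow measurable_const).ennreal_ofReal)] at hbound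
  have htop : (∫⁻ t in Ioc (0:ℝ) 1, ENNReal.ofReal (t ^ ((2*α+1) + σ))) = ⊤ := by
    by_contra h
    exact absurd (lint_rpow_ne_top_iff.mp h) (by linarith)
  rw [htop, ENNReal.mul_top (by simp [ENNReal.ofReal_eq_zero]; linarith)] at hbound
  exact top_le_iff.mp hbound

lemma muj_Ioc_pos (α β : ℝ) (hα : -(1/2:ℝ) < α) (hβ : -(1/2:ℝ) < β) :
    0 < μj α β (Ioc (1/2:ℝ) 1) := by
  set cl : ℝ := ((2:ℝ)^(2*α+1) * 2^(2*β+1)) * (1/2:ℝ)^(2*α+1) with hcl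
  have hcl0 : 0 < cl := by positivity
  have h1 : μj α β (Ioc (1/2:ℝ) 1) = ∫⁻ t in Ioc (1/2:ℝ) 1, ENNReal.ofReal (Δj α β t) := by
    unfold μj; rw [withDensity_apply _ measurableSet_Ioc]
  have h2 : (∫⁻ _ in Ioc (1/2:ℝ) 1, ENNReal.ofReal cl)
      ≤ ∫⁻ t in Ioc (1/2:ℝ) 1, ENNReal.ofReal (Δj α β t) := by
    apply setLIntegral_mono ((jac_meas α β).ennreal_ofReal)
    intro t ht
    apply ENNReal.ofReal_le_ofReal
    have ht' : t ∈ Ioc (0:ℝ) 1 := ⟨by linarith [ht.1], ht.2⟩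
    have h3 := le_jac α β hα hβ ht'
    have h4 : (1/2:ℝ)^(2*α+1) ≤ t^(2*α+1) :=
      Real.rpow_le_rpow (by norm_num) ht.1.le (by linarith)
    have h5 : (0:ℝ) ≤ (2:ℝ)^(2*α+1) * 2^(2*β+1) := by positivity
    nlinarith
  rw [setLIntegral_const] at h2
  have h6 : volume (Ioc (1/2:ℝ) 1) = ENNReal.ofReal (1/2) := by
    rw [Real.volume_Ioc]; norm_num
  rw [h6] at h2
  calc (0:ℝ≥0∞) < ENNReal.ofReal cl * ENNReal.ofReal (1/2) := by
        apply ENNReal.mul_pos <;> simp [ENNReal.ofReal_eq_zero] <;> linarith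
    _ ≤ _ := h1 ▸ h2

lemma sup_tail {H : ℝ → ℝ≥0∞} (hH : Measurable H) (ν : Measure ℝ)
    (htop : ∫⁻ t in Ioc (0:ℝ) 1, H t ∂ν = ⊤) {B : ℝ≥0∞} (hB : B ≠ ⊤) :
    ∃ a : ℝ, 0 < a ∧ a < 1 ∧ B < ∫⁻ t in Ioc a 1, H t ∂ν := by
  set f : ℕ → ℝ → ℝ≥0∞ := fun n => (Ioc (1/(n+2) : ℝ) 1).indicator H with hf
  have hmono : Monotone f := by
    intro m n hmn
    apply Set.indicator_le_indicator_of_subset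
    · apply Ioc_subset_Ioc_left
      apply one_div_le_one_div_of_le (by positivity)
      have := (Nat.cast_le (α := ℝ)).mpr hmn; linarith
    · exact fun a => zero_le
  have hfs : ∀ t, (⨆ n, f n t) = (Ioc (0:ℝ) 1).indicator H t := by
    intro t
    by_cases ht : t ∈ Ioc (0:ℝ) 1
    · rw [Set.indicator_of_mem ht]
      apply le_antisymm
      · exact iSup_le fun n => Set.indicator_le_self _ _ t
      · obtain ⟨n, hn⟩ := exists_nat_gt (1/t)
        have htn : 1/((n:ℝ)+2) < t := by
          rw [div_lt_iff₀ (by positivity)]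
          rw [div_lt_iff₀ ht.1] at hn
          nlinarith [ht.1]
        calc H t = f n t := (Set.indicator_of_mem (show t ∈ Ioc (1/((n:ℝ)+2)) 1 from ⟨htn, ht.2⟩) H).symm
          _ ≤ ⨆ n, f n t := le_iSup (fun n => f n t) n
    · have : ∀ n, f n t = 0 := by
        intro n
        apply Set.indicator_of_notMem
        intro hmem
        exact ht ⟨lt_trans (by positivity) hmem.1, hmem.2⟩
      simp [this, Set.indicator_of_notMem ht]
  have hlint := lintegral_iSup (μ := ν) (fun n => hH.indicator measurableSet_Ioc) hmono
  have h2 : (⨆ n, ∫⁻ x, f n x ∂ν) = ⊤ := by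
    rw [← hlint]
    have : (fun x => ⨆ n, f n x) = (Ioc (0:ℝ) 1).indicator H := funext hfs
    rw [this, lintegral_indicator measurableSet_Ioc]
    exact htop
  obtain ⟨n, hn⟩ := lt_iSup_iff.mp (h2 ▸ hB.lt_top)
  refine ⟨1/((n:ℝ)+2), by positivity, ?_, ?_⟩
  · rw [div_lt_one (by positivity)]; have : (0:ℝ) ≤ n := Nat.cast_nonneg n; linarith
  · rwa [hf, lintegral_indicator measurableSet_Ioc] at hn

theorem stmt10 (α β : ℝ) (hβα : β < α) (hβ : -(1/2 : ℝ) < β) (p : ℝ) (hp : 1 < p) :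
    (∃ C : ℝ, 0 < C ∧
        ∀ f : ℝ → ℝ,
          MemLp f (ENNReal.ofReal p) ((μj α β).restrict (Set.Ioc 0 1)) →
          (∫⁻ t in Set.Ioc (0 : ℝ) 1,
              (ENNReal.ofReal (t ^ (-(α + 1/2))) *
                  ∫⁻ r in Set.Ioc (0 : ℝ) 1,
                    ENNReal.ofReal (r ^ (-(α + 1/2)) * |f r|) ∂(μj α β)) ^ p
              ∂(μj α β)) ^ (1 / p) ≤
            ENNReal.ofReal C *
              eLpNorm f (ENNReal.ofReal p) ((μj α β).restrict (Set.Ioc 0 1))) ↔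
      ((4 * α + 4) / (2 * α + 3) < p ∧ p < (4 * α + 4) / (2 * α + 1)) := by
  have hα : -(1/2:ℝ) < α := hβ.trans hβα
  have hs : (0:ℝ) < α + 1/2 := by linarith
  have hp0 : (0:ℝ) < p := by linarith
  set q : ℝ := p/(p-1) with hq_def
  have hpq : p.HolderConjugate q := (Real.holderConjugate_iff_eq_conjExponent hp).2 rfl
  have hq1 : 1 < q := hpq.symm.lt
  have hq0 : (0:ℝ) < q := by linarith
  have hqp : q*(p-1) = p := by rw [hq_def]; exact div_mul_cancel₀ p (by linarith)
  set P := ENNReal.ofReal p with hP_def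
  have hP0 : P ≠ 0 := by
    rw [hP_def, Ne, ENNReal.ofReal_eq_zero]; push_neg; exact hp0
  have hPt : P ≠ ⊤ := ENNReal.ofReal_ne_top
  have hPr : P.toReal = p := ENNReal.toReal_ofReal hp0.le
  have hGmeas : Measurable (fun t : ℝ => ENNReal.ofReal (t ^ (-(α + 1/2)))) :=
    (measurable_id'.pow measurable_const).ennreal_ofReal
  set A : ℝ≥0∞ :=
    ∫⁻ t in Ioc (0:ℝ) 1, (ENNReal.ofReal (t ^ (-(α + 1/2)))) ^ p ∂(μj α β) with hA_def
  have hA_eq : A = ∫⁻ t in Ioc (0:ℝ) 1, ENNReal.ofReal (t ^ ((-(α + 1/2)) * p)) ∂(μj α β) := by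
    rw [hA_def]
    apply setLIntegral_congr_fun measurableSet_Ioc ?_
    intro t ht
    beta_reduce
    rw [Real.rpow_mul ht.1.le,
      ENNReal.ofReal_rpow_of_nonneg (Real.rpow_nonneg ht.1.le _) hp0.le]
  have hμfin : μj α β (Ioc (0:ℝ) 1) ≠ ⊤ := by
    have h0 := K_ne_top α β hα hβ (σ := 0) (by linarith)
    have h1 : (∫⁻ t in Ioc (0:ℝ) 1, ENNReal.ofReal (t ^ (0:ℝ)) ∂(μj α β))
        = μj α β (Ioc (0:ℝ) 1) := by
      rw [← setLIntegral_one]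
      apply setLIntegral_congr_fun measurableSet_Ioc ?_
      intro t ht
      beta_reduce
      rw [Real.rpow_zero, ENNReal.ofReal_one]
    rwa [h1] at h0
  have key : ∀ I : ℝ≥0∞,
      (∫⁻ t in Ioc (0:ℝ) 1, (ENNReal.ofReal (t ^ (-(α + 1/2))) * I) ^ p ∂(μj α β)) ^ (1/p)
        = A ^ (1/p) * I := by
    intro I
    have h1 : ∀ t : ℝ, (ENNReal.ofReal (t ^ (-(α + 1/2))) * I) ^ p
        = (ENNReal.ofReal (t ^ (-(α + 1/2)))) ^ p * I ^ p :=
      fun t => ENNReal.mul_rpow_of_nonneg _ _ hp0.le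
    simp_rw [h1]
    rw [lintegral_mul_const _ (hGmeas.pow measurable_const), ← hA_def,
      ENNReal.mul_rpow_of_nonneg _ _ (by positivity : (0:ℝ) ≤ 1/p),
      ← ENNReal.rpow_mul, mul_one_div_cancel (ne_of_gt hp0), ENNReal.rpow_one]
  have h2a1 : (0:ℝ) < 2*α+1 := by linarith
  have hiff₁ : (p < (4*α+4)/(2*α+1)) ↔ (-1 < (-(α+1/2)) * p + (2*α+1)) := by
    rw [lt_div_iff₀ h2a1]
    constructor <;> intro h <;> nlinarith
  have hiff₀ : ((4*α+4)/(2*α+3) < p) ↔ (-1 < (-(α+1/2)) * q + (2*α+1)) := by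
    rw [div_lt_iff₀ (by linarith : (0:ℝ) < 2*α+3)]
    constructor <;> intro h <;> nlinarith [hqp, hq0, hs, hp0]
  constructor
  · rintro ⟨C, hC, hbound⟩
    have hp₁ : p < (4*α+4)/(2*α+1) := by
      by_contra hcon
      push_neg at hcon
      rw [div_le_iff₀ h2a1] at hcon
      have hAtop : A = ⊤ := by
        rw [hA_eq]
        exact K_eq_top α β hα hβ (by nlinarith)
      set f₁ : ℝ → ℝ := (Ioc (1/2:ℝ) 1).indicator (fun _ => (1:ℝ)) with hf₁
      have hm₁ : MemLp f₁ P ((μj α β).restrict (Ioc (0:ℝ) 1)) := by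
        apply memLp_indicator_const P measurableSet_Ioc
        right
        rw [Measure.restrict_apply measurableSet_Ioc]
        exact ne_top_of_le_ne_top hμfin (measure_mono inter_subset_right)
      have hbd := hbound f₁ hm₁
      set I₁ : ℝ≥0∞ :=
        ∫⁻ r in Ioc (0:ℝ) 1, ENNReal.ofReal (r ^ (-(α + 1/2)) * |f₁ r|) ∂(μj α β) with hI₁
      have hI₁pos : 0 < I₁ := by
        have hstep : (∫⁻ r in Ioc (0:ℝ) 1,
            (Ioc (1/2:ℝ) 1).indicator (fun _ => (1:ℝ≥0∞)) r ∂(μj α β)) ≤ I₁ := by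
          rw [hI₁]
          apply setLIntegral_mono
            (((measurable_id'.pow measurable_const).mul
              ((measurable_const.indicator measurableSet_Ioc).abs)).ennreal_ofReal)
          intro r hr
          by_cases h : r ∈ Ioc (1/2:ℝ) 1
          · simp only [hf₁, Pi.mul_apply, Set.indicator_of_mem h, abs_one, mul_one]
            exact ENNReal.one_le_ofReal.mpr
              (Real.one_le_rpow_of_pos_of_le_one_of_nonpos (z := -(α + 1/2)) hr.1 hr.2 (by linarith))
          · rw [Set.indicator_of_notMem h]
            exact zero_le
        have heq : (∫⁻ r in Ioc (0:ℝ) 1,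
            (Ioc (1/2:ℝ) 1).indicator (fun _ => (1:ℝ≥0∞)) r ∂(μj α β))
            = μj α β (Ioc (1/2:ℝ) 1) := by
          rw [lintegral_indicator measurableSet_Ioc,
            Measure.restrict_restrict measurableSet_Ioc,
            inter_eq_self_of_subset_left (Ioc_subset_Ioc_left (by norm_num)),
            setLIntegral_one]
        calc (0:ℝ≥0∞) < μj α β (Ioc (1/2:ℝ) 1) := muj_Ioc_pos α β hα hβ
          _ = _ := heq.symm
          _ ≤ I₁ := hstep
      rw [key I₁] at hbd
      rw [hAtop, ENNReal.top_rpow_of_pos (by positivity), ENNReal.top_mul hI₁pos.ne',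
        top_le_iff] at hbd
      exact ENNReal.mul_ne_top ENNReal.ofReal_ne_top hm₁.2.ne hbd
    have hp₀ : (4*α+4)/(2*α+3) < p := by
      by_contra hcon
      push_neg at hcon
      have hAne : A ≠ ⊤ := by rw [hA_eq]; exact K_ne_top α β hα hβ (hiff₁.mp hp₁)
      have hApos : 0 < A := by
        have h1 : μj α β (Ioc (0:ℝ) 1) ≤ A := by
          rw [hA_def, ← setLIntegral_one]
          apply setLIntegral_mono (hGmeas.pow measurable_const)
          intro t ht
          have h2 : (1:ℝ≥0∞) ≤ ENNReal.ofReal (t ^ (-(α + 1/2))) :=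
            ENNReal.one_le_ofReal.mpr
              (Real.one_le_rpow_of_pos_of_le_one_of_nonpos (z := -(α + 1/2)) ht.1 ht.2 (by linarith))
          calc (1:ℝ≥0∞) = 1 ^ p := (ENNReal.one_rpow p).symm
            _ ≤ _ := ENNReal.rpow_le_rpow h2 hp0.le
        calc (0:ℝ≥0∞) < μj α β (Ioc (1/2:ℝ) 1) := muj_Ioc_pos α β hα hβ
          _ ≤ μj α β (Ioc (0:ℝ) 1) := measure_mono (Ioc_subset_Ioc_left (by norm_num))
          _ ≤ A := h1
      have hcond : (-(α+1/2)) * q + (2*α+1) ≤ -1 := by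
        by_contra hq'
        push_neg at hq'
        exact absurd (hiff₀.mpr hq') (not_lt.mpr hcon)
      have hNp0 : A ^ (1/p) ≠ 0 := by
        intro h
        rcases ENNReal.rpow_eq_zero_iff.mp h with ⟨h1, _⟩ | ⟨h1, _⟩
        · exact hApos.ne' h1
        · exact hAne h1
      have hNpt : A ^ (1/p) ≠ ⊤ := ENNReal.rpow_ne_top_of_nonneg (by positivity) hAne
      have hHmeas : Measurable (fun r : ℝ => ENNReal.ofReal (r ^ (-((α+1/2)*q)))) :=
        (measurable_id'.pow measurable_const).ennreal_ofReal
      have htop : (∫⁻ r in Ioc (0:ℝ) 1,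
          ENNReal.ofReal (r ^ (-((α+1/2)*q))) ∂(μj α β)) = ⊤ :=
        K_eq_top α β hα hβ (by nlinarith [hcond])
      have hBt : (ENNReal.ofReal C / A ^ (1/p)) ^ q ≠ ⊤ :=
        (ENNReal.rpow_lt_top_of_nonneg hq0.le
          (ENNReal.div_lt_top ENNReal.ofReal_ne_top hNp0).ne).ne
      obtain ⟨a, ha0, ha1, haB⟩ := sup_tail hHmeas (μj α β) htop hBt
      set M : ℝ≥0∞ := ∫⁻ r in Ioc a 1, ENNReal.ofReal (r ^ (-((α+1/2)*q))) ∂(μj α β) with hM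
      have hMne : M ≠ ⊤ := by
        have hb : M ≤ ENNReal.ofReal (a ^ (-((α+1/2)*q))) * μj α β (Ioc a 1) := by
          rw [hM, ← setLIntegral_const]
          apply setLIntegral_mono measurable_const
          intro r hr
          exact ENNReal.ofReal_le_ofReal
            (Real.rpow_le_rpow_of_nonpos ha0 hr.1.le (by nlinarith))
        exact ne_top_of_le_ne_top
          (ENNReal.mul_ne_top ENNReal.ofReal_ne_top
            (ne_top_of_le_ne_top hμfin (measure_mono (Ioc_subset_Ioc_left ha0.le)))) hb
      set c : ℝ := (α+1/2)*(q-1) with hc_def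
      have hqm1p : (q-1)*p = q := by nlinarith [hqp]
      set fa : ℝ → ℝ := (Ioc a 1).indicator (fun r => r ^ (-c)) with hfa
      have hfam : Measurable fa :=
        (measurable_id'.pow measurable_const).indicator measurableSet_Ioc
      have hind : ∫⁻ r in Ioc (0:ℝ) 1,
          (Ioc a 1).indicator (fun r => ENNReal.ofReal (r ^ (-((α+1/2)*q)))) r ∂(μj α β) = M := by
        rw [lintegral_indicator measurableSet_Ioc, Measure.restrict_restrict measurableSet_Ioc,
          inter_eq_self_of_subset_left (Ioc_subset_Ioc_left ha0.le), hM]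
      have hnorm : ∫⁻ r in Ioc (0:ℝ) 1, (‖fa r‖ₑ) ^ p ∂(μj α β) = M := by
        rw [← hind]
        apply setLIntegral_congr_fun measurableSet_Ioc ?_
        intro r hr
        by_cases h : r ∈ Ioc a 1
        · simp only [hfa, Set.indicator_of_mem h]
          rw [Real.enorm_eq_ofReal (Real.rpow_nonneg (lt_trans ha0 h.1).le _),
            ENNReal.ofReal_rpow_of_nonneg (Real.rpow_nonneg (lt_trans ha0 h.1).le _) hp0.le,
            ← Real.rpow_mul (lt_trans ha0 h.1).le]
          congr 2
          rw [hc_def]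
          nlinarith [hqm1p]
        · simp only [hfa, Set.indicator_of_notMem h]
          simp [ENNReal.zero_rpow_of_pos hp0]
      have heLp : eLpNorm fa P ((μj α β).restrict (Ioc (0:ℝ) 1)) = M ^ (1/p) := by
        rw [eLpNorm_eq_lintegral_rpow_enorm_toReal hP0 hPt, hPr, hnorm]
      have hmem : MemLp fa P ((μj α β).restrict (Ioc (0:ℝ) 1)) :=
        ⟨hfam.aestronglyMeasurable, by
          rw [heLp]; exact ENNReal.rpow_lt_top_of_nonneg (by positivity) hMne⟩
      have hbd := hbound fa hmem
      have hIfa : (∫⁻ r in Ioc (0:ℝ) 1,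
          ENNReal.ofReal (r ^ (-(α + 1/2)) * |fa r|) ∂(μj α β)) = M := by
        rw [← hind]
        apply setLIntegral_congr_fun measurableSet_Ioc ?_
        intro r hr
        by_cases h : r ∈ Ioc a 1
        · simp only [hfa, Set.indicator_of_mem h]
          rw [abs_of_nonneg (Real.rpow_nonneg (lt_trans ha0 h.1).le _),
            ← Real.rpow_add (lt_trans ha0 h.1)]
          congr 2
          rw [hc_def]; ring
        · simp only [hfa, Set.indicator_of_notMem h]
          rw [abs_zero, mul_zero, ENNReal.ofReal_zero]
      rw [hIfa, key M, heLp] at hbd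
      have hMle : M ≤ (ENNReal.ofReal C / A ^ (1/p)) ^ q := by
        rcases eq_or_ne M 0 with h0 | h0
        · rw [h0]; exact zero_le
        · have hsplit : M = M ^ (1/p) * M ^ (1/q) := by
            rw [← ENNReal.rpow_add _ _ h0 hMne,
              show 1/p + 1/q = 1 by
                rw [one_div, one_div]; exact hpq.inv_add_inv_eq_one,
              ENNReal.rpow_one]
          have h1 : (A ^ (1/p) * M ^ (1/q)) * M ^ (1/p) ≤ ENNReal.ofReal C * M ^ (1/p) := by
            calc (A ^ (1/p) * M ^ (1/q)) * M ^ (1/p)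
                = A ^ (1/p) * (M ^ (1/p) * M ^ (1/q)) := by ring
              _ = A ^ (1/p) * M := by rw [← hsplit]
              _ ≤ ENNReal.ofReal C * M ^ (1/p) := hbd
          have hMp0 : M ^ (1/p) ≠ 0 := by
            intro h
            rcases ENNReal.rpow_eq_zero_iff.mp h with ⟨h1, _⟩ | ⟨h1, _⟩
            · exact h0 h1
            · exact hMne h1
          have hMpt : M ^ (1/p) ≠ ⊤ := ENNReal.rpow_ne_top_of_nonneg (by positivity) hMne
          have h2 : A ^ (1/p) * M ^ (1/q) ≤ ENNReal.ofReal C :=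
            (ENNReal.mul_le_mul_iff_left hMp0 hMpt).mp h1
          have h3 : M ^ (1/q) ≤ ENNReal.ofReal C / A ^ (1/p) := by
            rw [ENNReal.le_div_iff_mul_le (Or.inl hNp0) (Or.inl hNpt)]
            calc M ^ (1/q) * A ^ (1/p) = A ^ (1/p) * M ^ (1/q) := mul_comm _ _
              _ ≤ _ := h2
          calc M = (M ^ (1/q)) ^ q := by
                rw [← ENNReal.rpow_mul, one_div_mul_cancel (ne_of_gt hq0), ENNReal.rpow_one]
            _ ≤ (ENNReal.ofReal C / A ^ (1/p)) ^ q := ENNReal.rpow_le_rpow h3 hq0.le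
      exact absurd haB (not_lt.mpr hMle)
    exact ⟨hp₀, hp₁⟩
  · rintro ⟨h₀, h₁⟩
    have hAne : A ≠ ⊤ := by rw [hA_eq]; exact K_ne_top α β hα hβ (hiff₁.mp h₁)
    have hQne : (∫⁻ r in Ioc (0:ℝ) 1,
        ENNReal.ofReal (r ^ ((-(α+1/2))*q)) ∂(μj α β)) ≠ ⊤ :=
      K_ne_top α β hα hβ (hiff₀.mp h₀)
    have hNpt : A ^ (1/p) ≠ ⊤ := ENNReal.rpow_ne_top_of_nonneg (by positivity) hAne
    have hNqt : (∫⁻ r in Ioc (0:ℝ) 1,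
        ENNReal.ofReal (r ^ ((-(α+1/2))*q)) ∂(μj α β)) ^ (1/q) ≠ ⊤ :=
      ENNReal.rpow_ne_top_of_nonneg (by positivity) hQne
    set Nq : ℝ≥0∞ := (∫⁻ r in Ioc (0:ℝ) 1,
        ENNReal.ofReal (r ^ ((-(α+1/2))*q)) ∂(μj α β)) ^ (1/q) with hNq_def
    have hfin : A ^ (1/p) * Nq ≠ ⊤ := ENNReal.mul_ne_top hNpt hNqt
    refine ⟨(A ^ (1/p) * Nq).toReal + 1, by positivity, ?_⟩
    intro f hf
    rw [key]
    have hfm : AEMeasurable (fun r => ENNReal.ofReal |f r|)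
        ((μj α β).restrict (Ioc (0:ℝ) 1)) := by
      have h := hf.1.norm.aemeasurable.ennreal_ofReal
      simpa [Real.norm_eq_abs] using h
    have hIeq : (∫⁻ r in Ioc (0:ℝ) 1, ENNReal.ofReal (r ^ (-(α + 1/2)) * |f r|) ∂(μj α β))
        = ∫⁻ r in Ioc (0:ℝ) 1,
            ENNReal.ofReal |f r| * ENNReal.ofReal (r ^ (-(α + 1/2))) ∂(μj α β) := by
      apply setLIntegral_congr_fun measurableSet_Ioc ?_
      intro r hr
      beta_reduce
      rw [ENNReal.ofReal_mul (Real.rpow_nonneg hr.1.le _), mul_comm]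
    have hHolder := ENNReal.lintegral_mul_le_Lp_mul_Lq ((μj α β).restrict (Ioc (0:ℝ) 1))
      hpq hfm hGmeas.aemeasurable
    simp only [Pi.mul_apply] at hHolder
    have hfLp : (∫⁻ r in Ioc (0:ℝ) 1, (ENNReal.ofReal |f r|) ^ p ∂(μj α β)) ^ (1/p)
        = eLpNorm f P ((μj α β).restrict (Ioc (0:ℝ) 1)) := by
      rw [eLpNorm_eq_lintegral_rpow_enorm_toReal hP0 hPt, hPr]
      congr 1
      apply lintegral_congr
      intro r
      rw [Real.enorm_eq_ofReal_abs]
    have hG_q : (∫⁻ r in Ioc (0:ℝ) 1,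
        (ENNReal.ofReal (r ^ (-(α + 1/2)))) ^ q ∂(μj α β)) ^ (1/q) = Nq := by
      rw [hNq_def]
      congr 1
      apply setLIntegral_congr_fun measurableSet_Ioc ?_
      intro r hr
      beta_reduce
      rw [Real.rpow_mul hr.1.le,
        ENNReal.ofReal_rpow_of_nonneg (Real.rpow_nonneg hr.1.le _) hq0.le]
    have hI_le : (∫⁻ r in Ioc (0:ℝ) 1,
        ENNReal.ofReal (r ^ (-(α + 1/2)) * |f r|) ∂(μj α β))
        ≤ eLpNorm f P ((μj α β).restrict (Ioc (0:ℝ) 1)) * Nq := by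
      rw [hIeq]
      refine le_trans hHolder ?_
      rw [hfLp, hG_q]
    calc A ^ (1/p) * (∫⁻ r in Ioc (0:ℝ) 1,
          ENNReal.ofReal (r ^ (-(α + 1/2)) * |f r|) ∂(μj α β))
        ≤ A ^ (1/p) * (eLpNorm f P ((μj α β).restrict (Ioc (0:ℝ) 1)) * Nq) :=
          mul_le_mul_right hI_le _
      _ = (A ^ (1/p) * Nq) * eLpNorm f P ((μj α β).restrict (Ioc (0:ℝ) 1)) := by ring
      _ ≤ ENNReal.ofReal ((A ^ (1/p) * Nq).toReal + 1) *
            eLpNorm f P ((μj α β).restrict (Ioc (0:ℝ) 1)) := by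
          apply mul_le_mul_left
          calc A ^ (1/p) * Nq = ENNReal.ofReal ((A ^ (1/p) * Nq).toReal) :=
                (ENNReal.ofReal_toReal hfin).symm
            _ ≤ _ := ENNReal.ofReal_le_ofReal (le_add_of_nonneg_right zero_le_one)
end

section
/- There exists a constant C > 0 such that for every measurable function f on (0,1] and every γ > 0: γ · μ({ t ∈ (0,1] : t^{−(α+1/2)} ∫₀^1 r^{−(α+1/2)} |f(r)| Δ(r) dr > γ })^{1/p₀} ≤ C · ∫₀^∞ μ({ r ∈ (0,1] : |f(r)| > s })^{1/p₀} ds. (The right-hand side is, up to a constant, the Lorentz L^{p₀,1}((0,1],dμ) norm of f, and the left-hand side is the weak-L^{p₀}(dμ) quasinorm of the dominating operator for the localized disc multiplier.) -/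
open MeasureTheory Real Set

namespace Stmt11Aux

open scoped ENNReal

/-- The comparison constant for the weight on `(0,1]`. -/
noncomputable def c2 (α β : ℝ) : ℝ :=
  (2 * Real.exp 2) ^ (2 * α + 1) * (2 * Real.cosh 1) ^ (2 * β + 1)

lemma c2_pos (α β : ℝ) : 0 < c2 α β := by
  have h1 : (0:ℝ) < 2 * Real.exp 2 := by positivity
  have h2 : (0:ℝ) < 2 * Real.cosh 1 := by positivity
  exact mul_pos (Real.rpow_pos_of_pos h1 _) (Real.rpow_pos_of_pos h2 _)

lemma meas_Δ (α β : ℝ) : Measurable fun t => ENNReal.ofReal (Δj α β t) := by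
  unfold Δj; fun_prop

lemma sinh_le_exp_two_mul {t : ℝ} (ht0 : 0 < t) (ht1 : t ≤ 1) :
    Real.sinh t ≤ Real.exp 2 * t := by
  rw [Real.sinh_eq]
  have h1 : Real.exp (-t) ≤ 1 := Real.exp_le_one_iff.mpr (by linarith)
  have h2 : -(2*t) + 1 ≤ Real.exp (-(2*t)) := Real.add_one_le_exp _
  have h3 : Real.exp (-(2*t)) * Real.exp (2*t) = 1 := by
    rw [← Real.exp_add]; simp
  have h4 : Real.exp (2*t) ≤ Real.exp 2 := Real.exp_le_exp.mpr (by linarith)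
  have h5 : Real.exp t * Real.exp t = Real.exp (2*t) := by
    rw [← Real.exp_add]; ring_nf
  have h6 : Real.exp (-t) * Real.exp t = 1 := by
    rw [← Real.exp_add]; simp
  have hp : 0 < Real.exp t := Real.exp_pos t
  have hp2 : 0 < Real.exp (2*t) := Real.exp_pos _
  have hp3 : 0 < Real.exp (-t) := Real.exp_pos _
  have h7 : 1 ≤ Real.exp (2*t) := Real.one_le_exp (by linarith)
  have h8 : Real.exp (-t) * Real.exp (2*t) = Real.exp t := by
    rw [← Real.exp_add]; ring_nf
  -- exp(2t) - 1 ≤ 2t * exp(2t)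
  have key : Real.exp (2*t) - 1 ≤ 2*t * Real.exp (2*t) := by
    nlinarith [mul_le_mul_of_nonneg_right h2 hp2.le]
  -- exp t - exp (-t) = exp(-t) * (exp(2t) - 1) ≤ exp(2t) - 1
  have key2 : Real.exp t - Real.exp (-t) ≤ Real.exp (2*t) - 1 := by
    nlinarith [mul_le_of_le_one_left (sub_nonneg.mpr h7) h1]
  have key3 : 2*t * Real.exp (2*t) ≤ 2*t * Real.exp 2 := by
    apply mul_le_mul_of_nonneg_left h4 (by linarith)
  linarith

lemma Δ_le {α β : ℝ} (hα : 0 < 2*α+1) (hβ : 0 < 2*β+1) {t : ℝ} (ht : t ∈ Ioc (0:ℝ) 1) :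
    Δj α β t ≤ c2 α β * t ^ (2*α+1) := by
  obtain ⟨ht0, ht1⟩ := ht
  have hs : 0 < Real.sinh t := ht0.trans (Real.self_lt_sinh_iff.mpr ht0)
  have hc : 0 < Real.cosh t := Real.cosh_pos t
  have h1 : (2*Real.sinh t) ^ (2*α+1) ≤ ((2*Real.exp 2) * t) ^ (2*α+1) := by
    apply Real.rpow_le_rpow (by positivity)
    · have := sinh_le_exp_two_mul ht0 ht1
      nlinarith
    · exact hα.le
  have h2 : (2*Real.cosh t) ^ (2*β+1) ≤ (2*Real.cosh 1) ^ (2*β+1) := by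
    apply Real.rpow_le_rpow (by positivity)
    · have : Real.cosh t ≤ Real.cosh 1 := by
        rw [Real.cosh_le_cosh]
        rw [abs_of_pos ht0, abs_one]
        exact ht1
      linarith
    · exact hβ.le
  have h3 : ((2*Real.exp 2) * t) ^ (2*α+1) = (2*Real.exp 2) ^ (2*α+1) * t ^ (2*α+1) :=
    Real.mul_rpow (by positivity) ht0.le
  calc Δj α β t ≤ ((2*Real.exp 2) * t) ^ (2*α+1) * (2*Real.cosh 1) ^ (2*β+1) := by
        unfold Δj
        apply mul_le_mul h1 h2 (Real.rpow_nonneg (by positivity) _) (by positivity)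
    _ = c2 α β * t ^ (2*α+1) := by rw [h3, c2]; ring

lemma lint_rpow {r : ℝ} (hr : -1 < r) {a : ℝ} (ha : 0 < a) :
    ∫⁻ t in Ioc (0:ℝ) a, ENNReal.ofReal (t ^ r) = ENNReal.ofReal (a ^ (r+1) / (r+1)) := by
  have hint : IntegrableOn (fun t : ℝ => t ^ r) (Ioc 0 a) := by
    rw [← intervalIntegrable_iff_integrableOn_Ioc_of_le ha.le]
    exact intervalIntegral.intervalIntegrable_rpow' hr
  rw [← ofReal_integral_eq_lintegral_ofReal hint
      ((ae_restrict_iff' measurableSet_Ioc).mpr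
        (Filter.Eventually.of_forall fun t ht => Real.rpow_nonneg ht.1.le r))]
  congr 1
  have hne : r + 1 ≠ 0 := by linarith
  rw [← intervalIntegral.integral_of_le ha.le, integral_rpow (Or.inl hr),
    Real.zero_rpow hne]
  ring

lemma lint_muj (α β : ℝ) {A : Set ℝ} (hA : MeasurableSet A) {h : ℝ → ℝ≥0∞}
    (hh : Measurable h) :
    ∫⁻ t in A, h t ∂(μj α β) = ∫⁻ t in A, h t * ENNReal.ofReal (Δj α β t) := by
  rw [μj, restrict_withDensity hA,
    lintegral_withDensity_eq_lintegral_mul _ (meas_Δ α β) hh]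
  exact lintegral_congr fun t => mul_comm _ _

lemma muj_apply (α β : ℝ) {A : Set ℝ} (hA : MeasurableSet A) :
    μj α β A = ∫⁻ t in A, ENNReal.ofReal (Δj α β t) := withDensity_apply _ hA

/-- The key integral bound `∫_{(0,a]} t^{-(α+1/2)} dμ ≤ c2 a^{α+3/2}/(α+3/2)`. -/
lemma lint_g_Ioc {α β : ℝ} (hα : 0 < 2*α+1) (hβ : 0 < 2*β+1) {a : ℝ}
    (ha : 0 < a) (ha1 : a ≤ 1) :
    ∫⁻ t in Ioc (0:ℝ) a, ENNReal.ofReal (t ^ (-(α + 1/2))) ∂(μj α β)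
      ≤ ENNReal.ofReal (c2 α β * (a ^ (α + 3/2) / (α + 3/2))) := by
  have hmeas : Measurable fun t : ℝ => ENNReal.ofReal (t ^ (-(α + 1/2))) := by fun_prop
  rw [lint_muj α β measurableSet_Ioc hmeas]
  have hle : ∀ t ∈ Ioc (0:ℝ) a,
      ENNReal.ofReal (t ^ (-(α + 1/2))) * ENNReal.ofReal (Δj α β t)
        ≤ ENNReal.ofReal (c2 α β) * ENNReal.ofReal (t ^ (α + 1/2)) := by
    intro t ht
    have ht0 : 0 < t := ht.1
    rw [← ENNReal.ofReal_mul (Real.rpow_nonneg ht0.le _), ← ENNReal.ofReal_mul (c2_pos α β).le]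
    apply ENNReal.ofReal_le_ofReal
    have hΔ : Δj α β t ≤ c2 α β * t ^ (2*α+1) := Δ_le hα hβ ⟨ht0, ht.2.trans ha1⟩
    have hpow : t ^ (-(α + 1/2)) * t ^ (2*α+1) = t ^ (α + 1/2) := by
      rw [← Real.rpow_add ht0]; ring_nf
    calc t ^ (-(α + 1/2)) * Δj α β t ≤ t ^ (-(α + 1/2)) * (c2 α β * t ^ (2*α+1)) := by
          apply mul_le_mul_of_nonneg_left hΔ (Real.rpow_nonneg ht0.le _)
      _ = c2 α β * t ^ (α + 1/2) := by rw [← hpow]; ring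
  calc ∫⁻ t in Ioc (0:ℝ) a, ENNReal.ofReal (t ^ (-(α + 1/2))) * ENNReal.ofReal (Δj α β t)
      ≤ ∫⁻ t in Ioc (0:ℝ) a, ENNReal.ofReal (c2 α β) * ENNReal.ofReal (t ^ (α + 1/2)) :=
        setLIntegral_mono (by fun_prop) hle
    _ = ENNReal.ofReal (c2 α β) * ∫⁻ t in Ioc (0:ℝ) a, ENNReal.ofReal (t ^ (α + 1/2)) :=
        lintegral_const_mul' _ _ ENNReal.ofReal_ne_top
    _ = ENNReal.ofReal (c2 α β) * ENNReal.ofReal (a ^ (α + 1/2 + 1) / (α + 1/2 + 1)) := by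
        rw [lint_rpow (by linarith) ha]
    _ ≤ ENNReal.ofReal (c2 α β * (a ^ (α + 3/2) / (α + 3/2))) := by
        rw [← ENNReal.ofReal_mul (c2_pos α β).le]
        apply ENNReal.ofReal_le_ofReal
        have : α + 1/2 + 1 = α + 3/2 := by ring
        rw [this]

lemma muj_Ioc_one_lt_top {α β : ℝ} (hα : 0 < 2*α+1) (hβ : 0 < 2*β+1) :
    μj α β (Ioc (0:ℝ) 1) < ⊤ := by
  rw [muj_apply α β measurableSet_Ioc]
  calc ∫⁻ t in Ioc (0:ℝ) 1, ENNReal.ofReal (Δj α β t)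
      ≤ ∫⁻ t in Ioc (0:ℝ) 1, ENNReal.ofReal (c2 α β * t ^ (2*α+1)) :=
        setLIntegral_mono (by fun_prop) fun t ht =>
          ENNReal.ofReal_le_ofReal (Δ_le hα hβ ht)
    _ = ∫⁻ t in Ioc (0:ℝ) 1, ENNReal.ofReal (c2 α β) * ENNReal.ofReal (t ^ (2*α+1)) := by
        apply setLIntegral_congr_fun measurableSet_Ioc
        exact fun t ht =>
          ENNReal.ofReal_mul (c2_pos α β).le
    _ = ENNReal.ofReal (c2 α β) * ∫⁻ t in Ioc (0:ℝ) 1, ENNReal.ofReal (t ^ (2*α+1)) :=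
        lintegral_const_mul' _ _ ENNReal.ofReal_ne_top
    _ < ⊤ := by
        rw [lint_rpow (by linarith) one_pos]
        exact ENNReal.mul_lt_top ENNReal.ofReal_lt_top ENNReal.ofReal_lt_top

/-- The key lemma: `∫_A t^{-(α+1/2)} dμ ≤ C₂ μ(A)^q` for `A ⊆ (0,1]`. -/
lemma key_bound {α β : ℝ} (hα : 0 < 2*α+1) (hβ : 0 < 2*β+1) {A : Set ℝ}
    (hA : MeasurableSet A) (hsub : A ⊆ Ioc (0:ℝ) 1) :
    ∫⁻ t in A, ENNReal.ofReal (t ^ (-(α + 1/2))) ∂(μj α β)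
      ≤ ENNReal.ofReal (c2 α β / (α + 3/2) + 1) * (μj α β A) ^ ((α + 3/2)/(2*α+2)) := by
  have hq : 0 < (α + 3/2)/(2*α+2) := by
    apply div_pos <;> linarith
  have hc2 := c2_pos α β
  have ha32 : (0:ℝ) < α + 3/2 := by linarith
  have hC2 : (0:ℝ) < c2 α β / (α + 3/2) + 1 := by positivity
  have hm_fin : μj α β A ≠ ⊤ :=
    ((measure_mono hsub).trans_lt (muj_Ioc_one_lt_top hα hβ)).ne
  rcases eq_or_ne (μj α β A) 0 with h0 | h0
  · rw [setLIntegral_measure_zero _ _ h0]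
    exact zero_le
  by_cases h1 : 1 ≤ μj α β A
  · calc ∫⁻ t in A, ENNReal.ofReal (t ^ (-(α + 1/2))) ∂(μj α β)
        ≤ ∫⁻ t in Ioc (0:ℝ) 1, ENNReal.ofReal (t ^ (-(α + 1/2))) ∂(μj α β) :=
          lintegral_mono_set hsub
      _ ≤ ENNReal.ofReal (c2 α β * (1 ^ (α + 3/2) / (α + 3/2))) :=
          lint_g_Ioc hα hβ one_pos le_rfl
      _ ≤ ENNReal.ofReal (c2 α β / (α + 3/2) + 1) * 1 := by
          rw [mul_one, Real.one_rpow]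
          apply ENNReal.ofReal_le_ofReal
          rw [mul_one_div]
          linarith
      _ ≤ ENNReal.ofReal (c2 α β / (α + 3/2) + 1) * (μj α β A) ^ ((α + 3/2)/(2*α+2)) :=
          mul_le_mul_right (ENNReal.one_le_rpow h1 hq) _
  · push_neg at h1
    set m := (μj α β A).toReal with hm_def
    have hm0 : 0 < m := ENNReal.toReal_pos h0 hm_fin
    have hm1 : m < 1 := by
      rw [hm_def]
      rw [← ENNReal.toReal_one]
      exact ENNReal.toReal_strict_mono ENNReal.one_ne_top h1
    set a := m ^ (1/(2*α+2)) with ha_def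
    have ha0 : 0 < a := Real.rpow_pos_of_pos hm0 _
    have ha1 : a ≤ 1 := Real.rpow_le_one hm0.le hm1.le (le_of_lt (div_pos one_pos (by linarith)))
    -- split A
    have hsplit : A ⊆ Ioc (0:ℝ) a ∪ (A ∩ Ioi a) := by
      intro t ht
      rcases le_or_gt t a with h | h
      · exact Or.inl ⟨(hsub ht).1, h⟩
      · exact Or.inr ⟨ht, h⟩
    have hbound1 : ∫⁻ t in Ioc (0:ℝ) a, ENNReal.ofReal (t ^ (-(α + 1/2))) ∂(μj α β)
        ≤ ENNReal.ofReal (c2 α β / (α + 3/2) * m ^ ((α + 3/2)/(2*α+2))) := by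
      refine (lint_g_Ioc hα hβ ha0 ha1).trans (ENNReal.ofReal_le_ofReal (le_of_eq ?_))
      rw [ha_def, ← Real.rpow_mul hm0.le]
      rw [show 1/(2*α+2) * (α + 3/2) = (α + 3/2)/(2*α+2) by ring]
      ring
    have hbound2 : ∫⁻ t in A ∩ Ioi a, ENNReal.ofReal (t ^ (-(α + 1/2))) ∂(μj α β)
        ≤ ENNReal.ofReal (m ^ ((α + 3/2)/(2*α+2))) := by
      have hle : ∀ t ∈ A ∩ Ioi a, ENNReal.ofReal (t ^ (-(α + 1/2)))
          ≤ ENNReal.ofReal (a ^ (-(α + 1/2))) := by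
        intro t ⟨htA, hta⟩
        apply ENNReal.ofReal_le_ofReal
        rw [Real.rpow_neg (hsub htA).1.le, Real.rpow_neg ha0.le]
        apply inv_anti₀ (Real.rpow_pos_of_pos ha0 _)
        exact Real.rpow_le_rpow ha0.le (le_of_lt hta) (by linarith)
      calc ∫⁻ t in A ∩ Ioi a, ENNReal.ofReal (t ^ (-(α + 1/2))) ∂(μj α β)
          ≤ ∫⁻ _ in A ∩ Ioi a, ENNReal.ofReal (a ^ (-(α + 1/2))) ∂(μj α β) :=
            setLIntegral_mono measurable_const hle
        _ = ENNReal.ofReal (a ^ (-(α + 1/2))) * μj α β (A ∩ Ioi a) :=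
            setLIntegral_const _ _
        _ ≤ ENNReal.ofReal (a ^ (-(α + 1/2))) * μj α β A :=
            mul_le_mul_right (measure_mono inter_subset_left) _
        _ = ENNReal.ofReal (a ^ (-(α + 1/2))) * ENNReal.ofReal m := by
            rw [hm_def, ENNReal.ofReal_toReal hm_fin]
        _ = ENNReal.ofReal (a ^ (-(α + 1/2)) * m) := by
            rw [ENNReal.ofReal_mul (Real.rpow_nonneg ha0.le _)]
        _ = ENNReal.ofReal (m ^ ((α + 3/2)/(2*α+2))) := by
            congr 1
            have step : a ^ (-(α+1/2)) * m
                = m ^ (1/(2*α+2) * (-(α+1/2))) * m ^ (1:ℝ) := by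
              rw [ha_def, ← Real.rpow_mul hm0.le, Real.rpow_one]
            rw [step, ← Real.rpow_add hm0]
            congr 1
            have h2a : (2*α+2) ≠ 0 := by linarith
            have h3 := mul_inv_cancel₀ h2a
            linear_combination (-1:ℝ) * h3
    have hq_eq : (μj α β A) ^ ((α + 3/2)/(2*α+2)) = ENNReal.ofReal (m ^ ((α + 3/2)/(2*α+2))) := by
      conv_lhs => rw [← ENNReal.ofReal_toReal hm_fin]
      rw [← hm_def, ENNReal.ofReal_rpow_of_pos hm0]
    calc ∫⁻ t in A, ENNReal.ofReal (t ^ (-(α + 1/2))) ∂(μj α β)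
        ≤ ∫⁻ t in Ioc (0:ℝ) a ∪ (A ∩ Ioi a), ENNReal.ofReal (t ^ (-(α + 1/2))) ∂(μj α β) :=
          lintegral_mono_set hsplit
      _ ≤ (∫⁻ t in Ioc (0:ℝ) a, ENNReal.ofReal (t ^ (-(α + 1/2))) ∂(μj α β))
            + ∫⁻ t in A ∩ Ioi a, ENNReal.ofReal (t ^ (-(α + 1/2))) ∂(μj α β) :=
          lintegral_union_le _ _ _
      _ ≤ ENNReal.ofReal (c2 α β / (α + 3/2) * m ^ ((α + 3/2)/(2*α+2)))
            + ENNReal.ofReal (m ^ ((α + 3/2)/(2*α+2))) := add_le_add hbound1 hbound2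
      _ = ENNReal.ofReal ((c2 α β / (α + 3/2) + 1) * m ^ ((α + 3/2)/(2*α+2))) := by
          rw [← ENNReal.ofReal_add (by positivity) (by positivity)]
          congr 1
          ring
      _ = ENNReal.ofReal (c2 α β / (α + 3/2) + 1) * (μj α β A) ^ ((α + 3/2)/(2*α+2)) := by
          rw [hq_eq, ← ENNReal.ofReal_mul hC2.le]

end Stmt11Aux

theorem stmt11 (α β : ℝ) (hβα : β < α) (hβ : -(1/2 : ℝ) < β) :
    ∃ C : ℝ, 0 < C ∧
      ∀ f : ℝ → ℝ, Measurable f → ∀ γ : ℝ, 0 < γ →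
        ENNReal.ofReal γ *
            (μj α β {t : ℝ | t ∈ Set.Ioc (0 : ℝ) 1 ∧
                ENNReal.ofReal γ <
                  ENNReal.ofReal (t ^ (-(α + 1/2))) *
                    ∫⁻ r in Set.Ioc (0 : ℝ) 1,
                      ENNReal.ofReal (r ^ (-(α + 1/2)) * |f r|) ∂(μj α β)}) ^
              (1 / ((4 * α + 4) / (2 * α + 3))) ≤
          ENNReal.ofReal C *
            ∫⁻ s in Set.Ioi (0 : ℝ),
              (μj α β {r : ℝ | r ∈ Set.Ioc (0 : ℝ) 1 ∧ s < |f r|}) ^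
                (1 / ((4 * α + 4) / (2 * α + 3))) := by
  have hα : -(1/2:ℝ) < α := hβ.trans hβα
  have hα2 : (0:ℝ) < 2*α+1 := by linarith
  have hβ2 : (0:ℝ) < 2*β+1 := by linarith
  have h23 : (0:ℝ) < 2*α+3 := by linarith
  have h44 : (0:ℝ) < 4*α+4 := by linarith
  have h22 : (0:ℝ) < 2*α+2 := by linarith
  have h32 : (0:ℝ) < α+3/2 := by linarith
  set q : ℝ := (α + 3/2)/(2*α+2) with hq_def
  have hq_pos : 0 < q := div_pos h32 h22
  set p : ℝ := (4*α+4)/(2*α+3) with hp_def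
  have hp_pos : 0 < p := div_pos h44 h23
  have hpq : p * q = 1 := by
    rw [hp_def, hq_def]
    rw [div_mul_div_comm, div_eq_one_iff_eq (mul_pos h23 h22).ne']
    ring
  have hqe : 1 / p = q := by
    rw [hp_def, hq_def, one_div_div]
    rw [div_eq_div_iff h44.ne' h22.ne']
    ring
  set c := Stmt11Aux.c2 α β with hc_def
  have hc := Stmt11Aux.c2_pos α β
  have hC2 : (0:ℝ) < c/(α+3/2) + 1 := by positivity
  refine ⟨c ^ q * (c/(α+3/2)+1), by positivity, ?_⟩
  intro f hf γ hγ
  rw [hqe]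
  set I := ∫⁻ r in Set.Ioc (0:ℝ) 1,
      ENNReal.ofReal (r ^ (-(α + 1/2)) * |f r|) ∂(μj α β) with hI_def
  set E := {t : ℝ | t ∈ Set.Ioc (0 : ℝ) 1 ∧
      ENNReal.ofReal γ < ENNReal.ofReal (t ^ (-(α + 1/2))) * I} with hE_def
  have hgI_meas : Measurable fun t : ℝ => ENNReal.ofReal (t ^ (-(α + 1/2))) * I := by
    fun_prop
  have hE_meas : MeasurableSet E := by
    have : E = Set.Ioc (0:ℝ) 1 ∩
        {t : ℝ | ENNReal.ofReal γ < ENNReal.ofReal (t ^ (-(α + 1/2))) * I} := rfl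
    rw [this]
    exact measurableSet_Ioc.inter (measurableSet_lt measurable_const hgI_meas)
  have hE_sub : E ⊆ Set.Ioc (0:ℝ) 1 := fun t ht => ht.1
  -- Chebyshev step
  have cheb : (ENNReal.ofReal γ) ^ p * μj α β E ≤ I ^ p * ENNReal.ofReal c := by
    have step1 : (ENNReal.ofReal γ) ^ p * μj α β E
        = ∫⁻ _ in E, (ENNReal.ofReal γ)^p ∂(μj α β) := (setLIntegral_const E _).symm
    rw [step1]
    have hpow_meas : Measurable fun t : ℝ => (ENNReal.ofReal (t ^ (-(α + 1/2))))^p := by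
      fun_prop
    calc ∫⁻ _ in E, (ENNReal.ofReal γ)^p ∂(μj α β)
        ≤ ∫⁻ t in E, (ENNReal.ofReal (t ^ (-(α + 1/2))) * I)^p ∂(μj α β) :=
          setLIntegral_mono' hE_meas (fun t ht => ENNReal.rpow_le_rpow ht.2.le hp_pos.le)
      _ = ∫⁻ t in E, I^p * (ENNReal.ofReal (t ^ (-(α + 1/2))))^p ∂(μj α β) := by
          apply lintegral_congr
          intro t
          rw [ENNReal.mul_rpow_of_nonneg _ _ hp_pos.le]
          ring
      _ = I^p * ∫⁻ t in E, (ENNReal.ofReal (t ^ (-(α + 1/2))))^p ∂(μj α β) :=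
          lintegral_const_mul _ hpow_meas
      _ ≤ I^p * ENNReal.ofReal c := by
          apply mul_le_mul_right
          rw [Stmt11Aux.lint_muj α β hE_meas hpow_meas]
          calc ∫⁻ t in E, (ENNReal.ofReal (t ^ (-(α + 1/2))))^p * ENNReal.ofReal (Δj α β t)
              ≤ ∫⁻ _ in E, ENNReal.ofReal c := by
                apply setLIntegral_mono' hE_meas
                intro t ht
                obtain ⟨ht0, ht1⟩ := hE_sub ht
                rw [ENNReal.ofReal_rpow_of_pos (Real.rpow_pos_of_pos ht0 _)]
                rw [← ENNReal.ofReal_mul (Real.rpow_nonneg (Real.rpow_nonneg ht0.le _) _)]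
                apply ENNReal.ofReal_le_ofReal
                have hΔ := Stmt11Aux.Δ_le hα2 hβ2 ⟨ht0, ht1⟩
                rw [← hc_def] at hΔ
                have e1 : (t ^ (-(α+1/2)))^p = t ^ ((-(α+1/2)) * p) :=
                  (Real.rpow_mul ht0.le _ _).symm
                have e2 : t ^ ((-(α+1/2)) * p) * t ^ (2*α+1)
                    = t ^ ((-(α+1/2))*p + (2*α+1)) := (Real.rpow_add ht0 _ _).symm
                have e3 : (-(α+1/2))*p + (2*α+1) = (2*α+1)/(2*α+3) := by
                  rw [hp_def]
                  have h3 := mul_inv_cancel₀ h23.ne'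
                  linear_combination (-(2*α+1)) * h3
                have e4 : t ^ ((2*α+1)/(2*α+3)) ≤ 1 :=
                  Real.rpow_le_one ht0.le ht1 (by positivity)
                have e5 : (0:ℝ) ≤ t ^ ((-(α+1/2)) * p) := Real.rpow_nonneg ht0.le _
                calc (t ^ (-(α+1/2)))^p * Δj α β t
                    ≤ t ^ ((-(α+1/2))*p) * (c * t^(2*α+1)) := by
                      rw [e1]
                      exact mul_le_mul_of_nonneg_left hΔ e5
                  _ = c * (t ^ ((-(α+1/2))*p) * t ^ (2*α+1)) := by ring
                  _ = c * t ^ ((2*α+1)/(2*α+3)) := by rw [e2, e3]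
                  _ ≤ c * 1 := mul_le_mul_of_nonneg_left e4 hc.le
                  _ = c := mul_one c
            _ = ENNReal.ofReal c * volume E := setLIntegral_const _ _
            _ ≤ ENNReal.ofReal c * 1 := by
                apply mul_le_mul_right
                have h := measure_mono hE_sub (μ := volume)
                simpa [Real.volume_Ioc] using h
            _ = ENNReal.ofReal c := mul_one _
  have chebq : ENNReal.ofReal γ * (μj α β E) ^ q ≤ (ENNReal.ofReal c) ^ q * I := by
    have h := ENNReal.rpow_le_rpow cheb hq_pos.le
    rw [ENNReal.mul_rpow_of_nonneg _ _ hq_pos.le, ENNReal.mul_rpow_of_nonneg _ _ hq_pos.le,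
      ← ENNReal.rpow_mul, ← ENNReal.rpow_mul, hpq, ENNReal.rpow_one, ENNReal.rpow_one] at h
    calc ENNReal.ofReal γ * (μj α β E) ^ q ≤ I * (ENNReal.ofReal c) ^ q := h
      _ = (ENNReal.ofReal c) ^ q * I := mul_comm _ _
  -- layer cake step
  have hg_meas : Measurable fun r : ℝ => ENNReal.ofReal (r ^ (-(α + 1/2))) := by fun_prop
  have hfabs_meas : Measurable fun r : ℝ => ENNReal.ofReal |f r| := by fun_prop
  set ν := ((μj α β).restrict (Set.Ioc (0:ℝ) 1)).withDensity
      (fun r : ℝ => ENNReal.ofReal (r ^ (-(α + 1/2)))) with hν_def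
  have hI_nu : I = ∫⁻ r, ENNReal.ofReal |f r| ∂ν := by
    rw [hν_def, lintegral_withDensity_eq_lintegral_mul _ hg_meas hfabs_meas, hI_def]
    apply setLIntegral_congr_fun measurableSet_Ioc
    intro r hr
    simp only [Pi.mul_apply]
    rw [← ENNReal.ofReal_mul (Real.rpow_nonneg hr.1.le _)]
  have layer : I = ∫⁻ s in Set.Ioi (0:ℝ), ν {a | s < |f a|} := by
    rw [hI_nu]
    exact lintegral_eq_lintegral_meas_lt ν
      (Filter.Eventually.of_forall fun r => abs_nonneg _) hf.abs.aemeasurable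
  have hnu_le : ∀ s : ℝ, ν {a | s < |f a|}
      ≤ ENNReal.ofReal (c/(α+3/2)+1) *
        (μj α β {r : ℝ | r ∈ Set.Ioc (0:ℝ) 1 ∧ s < |f r|}) ^ q := by
    intro s
    have hBs : MeasurableSet {a : ℝ | s < |f a|} := measurableSet_lt measurable_const hf.abs
    have hAs_eq : {a : ℝ | s < |f a|} ∩ Set.Ioc (0:ℝ) 1
        = {r : ℝ | r ∈ Set.Ioc (0:ℝ) 1 ∧ s < |f r|} := by
      ext r
      simp only [Set.mem_inter_iff, Set.mem_setOf_eq]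
      tauto
    rw [hν_def, withDensity_apply _ hBs, Measure.restrict_restrict hBs, hAs_eq]
    have hAs_meas : MeasurableSet {r : ℝ | r ∈ Set.Ioc (0:ℝ) 1 ∧ s < |f r|} := by
      rw [← hAs_eq]
      exact hBs.inter measurableSet_Ioc
    exact Stmt11Aux.key_bound hα2 hβ2 hAs_meas (fun r hr => hr.1)
  have stepB : I ≤ ENNReal.ofReal (c/(α+3/2)+1) *
      ∫⁻ s in Set.Ioi (0:ℝ),
        (μj α β {r : ℝ | r ∈ Set.Ioc (0:ℝ) 1 ∧ s < |f r|}) ^ q := by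
    rw [layer, ← lintegral_const_mul' _ _ ENNReal.ofReal_ne_top]
    exact lintegral_mono fun s => hnu_le s
  calc ENNReal.ofReal γ * (μj α β E) ^ q
      ≤ (ENNReal.ofReal c) ^ q * I := chebq
    _ ≤ (ENNReal.ofReal c) ^ q * (ENNReal.ofReal (c/(α+3/2)+1) *
          ∫⁻ s in Set.Ioi (0:ℝ),
            (μj α β {r : ℝ | r ∈ Set.Ioc (0:ℝ) 1 ∧ s < |f r|}) ^ q) :=
        mul_le_mul_right stepB _
    _ = ENNReal.ofReal (c ^ q * (c/(α+3/2)+1)) *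
          ∫⁻ s in Set.Ioi (0:ℝ),
            (μj α β {r : ℝ | r ∈ Set.Ioc (0:ℝ) 1 ∧ s < |f r|}) ^ q := by
        rw [ENNReal.ofReal_rpow_of_pos hc, ← mul_assoc,
          ← ENNReal.ofReal_mul (by positivity)]
end

section
/- There exists a constant C > 0 such that for every measurable kernel K : [1,∞) × (0,1/2] → ℂ satisfying |K(t,r)| ≤ e^{−ρt} t^{−1} r^{−(α+1/2)} for all t ≥ 1 and 0 < r ≤ 1/2, and every measurable f on (0,1/2], one has ( ∫₁^∞ | ∫₀^{1/2} K(t,r) f(r) Δ(r) dr |² Δ(t) dt )^{1/2} ≤ C · ∫₀^∞ μ({ r ∈ (0,1/2] : |f(r)| > s })^{1/p₀} ds. (The right-hand side is, up to a constant, the Lorentz L^{p₀,1}(dμ) norm of f; this is the endpoint L^{p₀,1} → L² bound for the operator S_{4,*}.) -/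
open MeasureTheory Real Set

lemma measurable_Δj {α β : ℝ} (hα : 0 ≤ 2*α+1) (hβ : 0 ≤ 2*β+1) :
    Measurable (Δj α β) := by
  unfold Δj
  exact ((((continuous_const.mul Real.continuous_sinh).rpow_const
      (fun x => Or.inr hα)).mul
    ((continuous_const.mul Real.continuous_cosh).rpow_const
      (fun x => Or.inr hβ)))).measurable

lemma two_sinh_le {r : ℝ} (h0 : 0 ≤ r) (h2 : r ≤ 1) :
    2 * Real.sinh r ≤ (2 * Real.exp 1) * r := by
  rw [Real.sinh_eq]
  have hE : Real.exp r ≤ Real.exp 1 := Real.exp_le_exp.mpr h2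
  have h1 : (-(2*r)) + 1 ≤ Real.exp (-(2*r)) := Real.add_one_le_exp _
  have h4 : Real.exp (-(2*r)) * Real.exp r = Real.exp (-r) := by
    rw [← Real.exp_add]; ring_nf
  have hpos : 0 < Real.exp r := Real.exp_pos r
  -- (1 - 2r) e^r ≤ e^{-r}, so e^r - e^{-r} ≤ 2 r e^r ≤ 2 r exp 1
  have key : Real.exp r - Real.exp (-r) ≤ 2*r*Real.exp r := by nlinarith
  nlinarith

lemma two_le_two_cosh (r : ℝ) : 2 ≤ 2 * Real.cosh r := by
  nlinarith [Real.one_le_cosh r]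

lemma two_cosh_le {r : ℝ} (h0 : 0 ≤ r) (h2 : r ≤ 1) :
    2 * Real.cosh r ≤ 2 * Real.exp 1 := by
  have h1 : Real.exp (-r) ≤ Real.exp r := Real.exp_le_exp.mpr (by linarith)
  have : Real.cosh r ≤ Real.exp r := by rw [Real.cosh_eq]; linarith
  have h3 : Real.exp r ≤ Real.exp 1 := Real.exp_le_exp.mpr h2
  linarith

lemma two_r_le_two_sinh {r : ℝ} (h0 : 0 ≤ r) : 2 * r ≤ 2 * Real.sinh r := by
  nlinarith [Real.self_le_sinh_iff.mpr h0]

-- for t ≥ 1 : 2 sinh t ≤ exp t, 2 cosh t ≤ 2 exp t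
lemma two_sinh_le_exp (t : ℝ) : 2 * Real.sinh t ≤ Real.exp t := by
  rw [Real.sinh_eq]; nlinarith [Real.exp_pos (-t)]

lemma two_cosh_le_exp {t : ℝ} (h0 : 0 ≤ t) : 2 * Real.cosh t ≤ 2 * Real.exp t := by
  have h1 : Real.exp (-t) ≤ Real.exp t := Real.exp_le_exp.mpr (by linarith)
  rw [Real.cosh_eq]; linarith


lemma Δj_le_on {α β : ℝ} (hα : 0 ≤ 2*α+1) (hβ : 0 ≤ 2*β+1) {r : ℝ}
    (hr : r ∈ Set.Ioc (0:ℝ) (1/2)) :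
    Δj α β r ≤ ((2*Real.exp 1) ^ (2*α+1) * (2*Real.exp 1) ^ (2*β+1)) * r ^ (2*α+1) := by
  obtain ⟨hr0, hr2⟩ := hr
  have hs0 : 0 ≤ 2 * Real.sinh r := by
    have := Real.sinh_pos_iff.mpr hr0; linarith
  have h1 : (2 * Real.sinh r) ^ (2*α+1) ≤ ((2*Real.exp 1) * r) ^ (2*α+1) :=
    Real.rpow_le_rpow hs0 (two_sinh_le hr0.le (by linarith)) hα
  have h2 : (2 * Real.cosh r) ^ (2*β+1) ≤ (2*Real.exp 1) ^ (2*β+1) := by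
    refine Real.rpow_le_rpow (by linarith [two_le_two_cosh r]) (two_cosh_le hr0.le (by linarith)) hβ
  have h3 : ((2*Real.exp 1) * r) ^ (2*α+1)
      = (2*Real.exp 1) ^ (2*α+1) * r ^ (2*α+1) :=
    Real.mul_rpow (by positivity) hr0.le
  have hc0 : 0 ≤ (2 * Real.cosh r) ^ (2*β+1) := Real.rpow_nonneg (by linarith [two_le_two_cosh r]) _
  have hb0 : 0 ≤ (2 * Real.sinh r) ^ (2*α+1) := Real.rpow_nonneg hs0 _
  calc Δj α β r = (2 * Real.sinh r) ^ (2*α+1) * (2 * Real.cosh r) ^ (2*β+1) := rfl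
    _ ≤ ((2*Real.exp 1) * r) ^ (2*α+1) * (2*Real.exp 1) ^ (2*β+1) := by
        apply mul_le_mul h1 h2 hc0 (Real.rpow_nonneg (by positivity) _)
    _ = ((2*Real.exp 1) ^ (2*α+1) * (2*Real.exp 1) ^ (2*β+1)) * r ^ (2*α+1) := by
        rw [h3]; ring

lemma Δj_ge_on {α β : ℝ} (hα : 0 ≤ 2*α+1) (hβ : 0 ≤ 2*β+1) {r : ℝ}
    (hr : r ∈ Set.Ioc (0:ℝ) (1/2)) :
    ((2:ℝ) ^ (2*α+1) * (2:ℝ) ^ (2*β+1)) * r ^ (2*α+1) ≤ Δj α β r := by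
  obtain ⟨hr0, hr2⟩ := hr
  have h1 : ((2:ℝ) * r) ^ (2*α+1) ≤ (2 * Real.sinh r) ^ (2*α+1) :=
    Real.rpow_le_rpow (by positivity) (two_r_le_two_sinh hr0.le) hα
  have h2 : (2:ℝ) ^ (2*β+1) ≤ (2 * Real.cosh r) ^ (2*β+1) :=
    Real.rpow_le_rpow (by norm_num) (two_le_two_cosh r) hβ
  have h3 : ((2:ℝ) * r) ^ (2*α+1) = (2:ℝ) ^ (2*α+1) * r ^ (2*α+1) :=
    Real.mul_rpow (by norm_num) hr0.le
  calc ((2:ℝ) ^ (2*α+1) * (2:ℝ) ^ (2*β+1)) * r ^ (2*α+1)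
      = ((2:ℝ) * r) ^ (2*α+1) * (2:ℝ) ^ (2*β+1) := by rw [h3]; ring
    _ ≤ (2 * Real.sinh r) ^ (2*α+1) * (2 * Real.cosh r) ^ (2*β+1) := by
        apply mul_le_mul h1 h2 (by positivity) (Real.rpow_nonneg ?_ _)
        have := Real.sinh_pos_iff.mpr hr0; linarith
    _ = Δj α β r := rfl

lemma Δj_le_exp {α β : ℝ} (hα : 0 ≤ 2*α+1) (hβ : 0 ≤ 2*β+1) {t : ℝ} (ht : 0 ≤ t) :
    Δj α β t ≤ (2:ℝ) ^ (2*β+1) * Real.exp ((2*α+2*β+2) * t) := by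
  have hs0 : 0 ≤ 2 * Real.sinh t := by
    have := Real.sinh_nonneg_iff.mpr ht; linarith
  have h1 : (2 * Real.sinh t) ^ (2*α+1) ≤ (Real.exp t) ^ (2*α+1) :=
    Real.rpow_le_rpow hs0 (two_sinh_le_exp t) hα
  have h2 : (2 * Real.cosh t) ^ (2*β+1) ≤ ((2:ℝ) * Real.exp t) ^ (2*β+1) :=
    Real.rpow_le_rpow (by linarith [two_le_two_cosh t]) (two_cosh_le_exp ht) hβ
  have h3 : ((2:ℝ) * Real.exp t) ^ (2*β+1) = (2:ℝ) ^ (2*β+1) * (Real.exp t) ^ (2*β+1) :=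
    Real.mul_rpow (by norm_num) (Real.exp_pos t).le
  have h4 : (Real.exp t) ^ (2*α+1) * ((2:ℝ) ^ (2*β+1) * (Real.exp t) ^ (2*β+1))
      = (2:ℝ) ^ (2*β+1) * Real.exp ((2*α+2*β+2) * t) := by
    rw [← Real.exp_mul, ← Real.exp_mul]
    rw [mul_comm ((2:ℝ) ^ (2*β+1)) (Real.exp (t * (2*β+1))), ← mul_assoc, ← Real.exp_add]
    ring_nf
  calc Δj α β t = (2 * Real.sinh t) ^ (2*α+1) * (2 * Real.cosh t) ^ (2*β+1) := rfl
    _ ≤ (Real.exp t) ^ (2*α+1) * ((2:ℝ) * Real.exp t) ^ (2*β+1) := by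
        apply mul_le_mul h1 h2 (Real.rpow_nonneg (by linarith [two_le_two_cosh t]) _)
          (Real.rpow_nonneg (Real.exp_pos t).le _)
    _ = (2:ℝ) ^ (2*β+1) * Real.exp ((2*α+2*β+2) * t) := by rw [h3]; exact h4


lemma setIneq {α : ℝ} (hα : -(1/2:ℝ) < α) :
    ∃ c : ℝ, 0 < c ∧ ∀ E : Set ℝ, MeasurableSet E → E ⊆ Set.Ioc (0:ℝ) (1/2) →
      ∫⁻ r in E, ENNReal.ofReal (r ^ (α + 1/2)) ≤
        ENNReal.ofReal c *
          (∫⁻ r in E, ENNReal.ofReal (r ^ (2*α + 1))) ^ ((2*α+3)/(4*α+4)) := by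
  have h1 : (0:ℝ) < α + 3/2 := by linarith
  have h2 : (0:ℝ) < 2*α + 2 := by linarith
  have h3 : (0:ℝ) < 2*α + 1 + 1 := by linarith
  set θ : ℝ := (2*α+3)/(4*α+4) with hθ
  have hθpos : 0 < θ := by apply div_pos <;> linarith
  refine ⟨(1/(α+3/2) + 1/(2*α+2)) * ((2*α+2) ^ θ), by positivity, ?_⟩
  intro E hE hEsub
  set m := ∫⁻ r in E, ENNReal.ofReal (r ^ (2*α+1)) with hm
  have hmtop : m ≠ ⊤ := by
    have hle : m ≤ ∫⁻ _ in E, 1 := by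
      refine setLIntegral_mono' hE (fun r hr => ?_)
      have := hEsub hr
      exact ENNReal.ofReal_le_one.mpr
        (Real.rpow_le_one (this.1.le) (by linarith [this.2]) (by linarith))
    have : m ≤ volume E := by simpa using hle
    refine ne_top_of_le_ne_top ?_ this
    exact (lt_of_le_of_lt (measure_mono hEsub) (by simp)).ne
  by_cases hm0 : m = 0
  · have hmble : Measurable fun r : ℝ => ENNReal.ofReal (r ^ (2*α+1)) :=
      ((continuous_id.rpow_const (fun x => Or.inr (by linarith))).measurable).ennreal_ofReal
    rw [hm, lintegral_eq_zero_iff hmble] at hm0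
    have hE0 : volume E = 0 := by
      have h1' : ∀ᵐ r ∂(volume.restrict E), ¬ (r ∈ E) := by
        filter_upwards [hm0] with r h
        intro hrE
        have hr0 : 0 < r := (hEsub hrE).1
        have hp := Real.rpow_pos_of_pos hr0 (2*α+1)
        simp only [Pi.zero_apply, ENNReal.ofReal_eq_zero] at h
        linarith
      have h2' : ∀ᵐ r ∂(volume.restrict E), r ∈ E := ae_restrict_mem hE
      have : ∀ᵐ (_ : ℝ) ∂(volume.restrict E), False := by
        filter_upwards [h1', h2'] with r ha hb using ha hb
      have := ae_iff.mp this
      simpa [Measure.restrict_apply, MeasurableSet.univ] using this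
    rw [Measure.restrict_eq_zero.mpr hE0]
    simp
  · have hM : 0 < m.toReal := ENNReal.toReal_pos hm0 hmtop
    set M := m.toReal with hMdef
    set ε : ℝ := ((2*α+2)*M) ^ (1/(2*α+2)) with hεdef
    have hεpos : 0 < ε := Real.rpow_pos_of_pos (by positivity) _
    have hεpow : ε ^ (2*α+2) = (2*α+2)*M := by
      rw [hεdef, ← Real.rpow_mul (by positivity), one_div_mul_cancel h2.ne', Real.rpow_one]
    -- split the integral
    have hsplit : ∫⁻ r in E, ENNReal.ofReal (r ^ (α + 1/2)) ≤
        (∫⁻ r in E ∩ Iic ε, ENNReal.ofReal (r ^ (α + 1/2))) +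
        (∫⁻ r in E ∩ Ioi ε, ENNReal.ofReal (r ^ (α + 1/2))) := by
      have : E = (E ∩ Iic ε) ∪ (E ∩ Ioi ε) := by
        rw [← inter_union_distrib_left, Iic_union_Ioi, inter_univ]
      nth_rewrite 1 [this]
      exact lintegral_union_le _ _ _
    -- part 1
    have hpart1 : ∫⁻ r in E ∩ Iic ε, ENNReal.ofReal (r ^ (α + 1/2)) ≤
        ENNReal.ofReal (ε ^ (α + 3/2) / (α + 3/2)) := by
      have hsub : E ∩ Iic ε ⊆ Ioc 0 ε := fun r hr => ⟨(hEsub hr.1).1, hr.2⟩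
      refine le_trans (lintegral_mono_set hsub) ?_
      have hint : IntegrableOn (fun r : ℝ => r ^ (α + 1/2)) (Ioc 0 ε) := by
        have := intervalIntegral.intervalIntegrable_rpow' (a := 0) (b := ε) (r := α + 1/2) (by linarith)
        rwa [intervalIntegrable_iff, uIoc_of_le hεpos.le] at this
      rw [← ofReal_integral_eq_lintegral_ofReal hint ?_]
      · apply ENNReal.ofReal_le_ofReal
        rw [← intervalIntegral.integral_of_le hεpos.le]
        rw [integral_rpow (Or.inl (by linarith))]
        rw [Real.zero_rpow (by linarith : α + 1/2 + 1 ≠ 0)]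
        have : α + 1/2 + 1 = α + 3/2 := by ring
        rw [this]
        simp
      · filter_upwards [ae_restrict_mem measurableSet_Ioc] with r hr
        exact Real.rpow_nonneg hr.1.le _
    -- part 2
    have hpart2 : ∫⁻ r in E ∩ Ioi ε, ENNReal.ofReal (r ^ (α + 1/2)) ≤
        ENNReal.ofReal (ε ^ (α + 3/2) / (2*α + 2)) := by
      have hpt : ∀ r ∈ E ∩ Ioi ε, ENNReal.ofReal (r ^ (α + 1/2)) ≤
          ENNReal.ofReal (ε ^ (-(α + 1/2))) * ENNReal.ofReal (r ^ (2*α+1)) := by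
        intro r hr
        have hrε : ε < r := hr.2
        have hr0 : 0 < r := lt_trans hεpos hrε
        rw [← ENNReal.ofReal_mul (Real.rpow_nonneg hεpos.le _)]
        apply ENNReal.ofReal_le_ofReal
        have heq : r ^ (α + 1/2) = r ^ (-(α + 1/2)) * r ^ (2*α+1) := by
          rw [← Real.rpow_add hr0]; ring_nf
        rw [heq]
        apply mul_le_mul_of_nonneg_right _ (Real.rpow_nonneg hr0.le _)
        exact Real.rpow_le_rpow_of_nonpos hεpos hrε.le (by linarith)
      calc ∫⁻ r in E ∩ Ioi ε, ENNReal.ofReal (r ^ (α + 1/2))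
          ≤ ∫⁻ r in E ∩ Ioi ε,
              ENNReal.ofReal (ε ^ (-(α + 1/2))) * ENNReal.ofReal (r ^ (2*α+1)) :=
            setLIntegral_mono' (hE.inter measurableSet_Ioi) hpt
        _ = ENNReal.ofReal (ε ^ (-(α + 1/2))) *
              ∫⁻ r in E ∩ Ioi ε, ENNReal.ofReal (r ^ (2*α+1)) :=
            lintegral_const_mul' _ _ ENNReal.ofReal_ne_top
        _ ≤ ENNReal.ofReal (ε ^ (-(α + 1/2))) * m :=
            mul_le_mul_right (lintegral_mono_set inter_subset_left) _
        _ = ENNReal.ofReal (ε ^ (α + 3/2) / (2*α + 2)) := by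
            rw [← ENNReal.ofReal_toReal hmtop, ← hMdef,
              ← ENNReal.ofReal_mul (Real.rpow_nonneg hεpos.le _)]
            congr 1
            have hM' : M = ε ^ (2*α+2) / (2*α+2) := by
              rw [hεpow, mul_div_cancel_left₀ _ h2.ne']
            have e1 : ε ^ (-(α + 1/2)) * ε ^ (2*α+2) = ε ^ (α + 3/2) := by
              rw [← Real.rpow_add hεpos]; congr 1; ring
            rw [hM', mul_div_assoc', e1]
    -- combine
    have hcomb : ∫⁻ r in E, ENNReal.ofReal (r ^ (α + 1/2)) ≤
        ENNReal.ofReal (ε ^ (α + 3/2) * (1/(α+3/2) + 1/(2*α+2))) := by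
      refine le_trans hsplit (le_trans (add_le_add hpart1 hpart2) ?_)
      rw [← ENNReal.ofReal_add (by positivity) (by positivity)]
      apply ENNReal.ofReal_le_ofReal
      have hεp : 0 ≤ ε ^ (α + 3/2) := Real.rpow_nonneg hεpos.le _
      rw [mul_add]
      gcongr <;> rw [div_eq_mul_one_div]
    refine le_trans hcomb ?_
    -- identify the right-hand side
    have hεθ : ε ^ (α + 3/2) = (2*α+2) ^ θ * M ^ θ := by
      rw [hεdef, ← Real.rpow_mul (by positivity),
        ← Real.mul_rpow (by positivity) hM.le]
      have h2' : (2*α+2) ≠ 0 := by linarith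
      have h4' : (4*α+4) ≠ 0 := by linarith
      congr 1
      rw [hθ]; field_simp; ring
    rw [← ENNReal.ofReal_toReal hmtop, ← hMdef,
      ENNReal.ofReal_rpow_of_pos hM,
      ← ENNReal.ofReal_mul (by positivity)]
    apply ENNReal.ofReal_le_ofReal
    rw [hεθ]; exact le_of_eq (by ring)


lemma Δj_nonneg {α β : ℝ} {r : ℝ} (hr : 0 ≤ r) : 0 ≤ Δj α β r := by
  unfold Δj
  apply mul_nonneg (Real.rpow_nonneg ?_ _) (Real.rpow_nonneg ?_ _)
  · have := Real.sinh_nonneg_iff.mpr hr; linarith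
  · linarith [two_le_two_cosh r]


lemma setIneqΔ {α β : ℝ} (hβα : β < α) (hβ : -(1/2:ℝ) < β) :
    ∃ c : ℝ, 0 < c ∧ ∀ E : Set ℝ, MeasurableSet E → E ⊆ Set.Ioc (0:ℝ) (1/2) →
      ∫⁻ r in E, ENNReal.ofReal (r ^ (-(α + 1/2)) * Δj α β r) ≤
        ENNReal.ofReal c * (μj α β E) ^ ((2*α+3)/(4*α+4)) := by
  have hα : -(1/2:ℝ) < α := lt_trans hβ hβα
  have hα1 : (0:ℝ) ≤ 2*α+1 := by linarith
  have hβ1 : (0:ℝ) ≤ 2*β+1 := by linarith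
  set θ : ℝ := (2*α+3)/(4*α+4) with hθ
  have hθpos : 0 < θ := by apply div_pos <;> linarith
  set cU : ℝ := (2*Real.exp 1) ^ (2*α+1) * (2*Real.exp 1) ^ (2*β+1) with hcU
  set cL : ℝ := (2:ℝ) ^ (2*α+1) * (2:ℝ) ^ (2*β+1) with hcL
  have hcUpos : 0 < cU := by
    apply mul_pos <;> exact Real.rpow_pos_of_pos (by positivity) _
  have hcLpos : 0 < cL := by
    apply mul_pos <;> exact Real.rpow_pos_of_pos (by norm_num) _
  obtain ⟨c₀, hc₀, hA⟩ := setIneq hα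
  refine ⟨cU * c₀ * (cL⁻¹ ^ θ), by positivity, ?_⟩
  intro E hE hEsub
  have step1 : ∫⁻ r in E, ENNReal.ofReal (r ^ (-(α + 1/2)) * Δj α β r) ≤
      ENNReal.ofReal cU * ∫⁻ r in E, ENNReal.ofReal (r ^ (α + 1/2)) := by
    rw [← lintegral_const_mul' _ _ ENNReal.ofReal_ne_top]
    refine setLIntegral_mono' hE (fun r hr => ?_)
    have hr0 : 0 < r := (hEsub hr).1
    rw [← ENNReal.ofReal_mul hcUpos.le]
    apply ENNReal.ofReal_le_ofReal
    have h1 : r ^ (-(α + 1/2)) * Δj α β r ≤ r ^ (-(α + 1/2)) * (cU * r ^ (2*α+1)) :=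
      mul_le_mul_of_nonneg_left (Δj_le_on hα1 hβ1 (hEsub hr)) (Real.rpow_nonneg hr0.le _)
    refine le_trans h1 (le_of_eq ?_)
    have h2 : r ^ (-(α + 1/2)) * r ^ (2*α+1) = r ^ (α + 1/2) := by
      rw [← Real.rpow_add hr0]; congr 1; ring
    rw [mul_left_comm, h2]
  have hμE : μj α β E = ∫⁻ r in E, ENNReal.ofReal (Δj α β r) := withDensity_apply _ hE
  have step3 : ∫⁻ r in E, ENNReal.ofReal (r ^ (2*α+1)) ≤
      ENNReal.ofReal cL⁻¹ * μj α β E := by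
    rw [hμE, ← lintegral_const_mul' _ _ ENNReal.ofReal_ne_top]
    refine setLIntegral_mono' hE (fun r hr => ?_)
    rw [← ENNReal.ofReal_mul (by positivity)]
    apply ENNReal.ofReal_le_ofReal
    have hge := Δj_ge_on hα1 hβ1 (hEsub hr)
    rw [← mul_le_mul_iff_right₀ hcLpos]
    calc cL * r ^ (2*α+1) ≤ Δj α β r := hge
      _ = cL * (cL⁻¹ * Δj α β r) := by field_simp
  calc ∫⁻ r in E, ENNReal.ofReal (r ^ (-(α + 1/2)) * Δj α β r)
      ≤ ENNReal.ofReal cU * ∫⁻ r in E, ENNReal.ofReal (r ^ (α + 1/2)) := step1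
    _ ≤ ENNReal.ofReal cU * (ENNReal.ofReal c₀ *
          (∫⁻ r in E, ENNReal.ofReal (r ^ (2*α + 1))) ^ θ) :=
        mul_le_mul_right (hA E hE hEsub) _
    _ ≤ ENNReal.ofReal cU * (ENNReal.ofReal c₀ *
          (ENNReal.ofReal cL⁻¹ * μj α β E) ^ θ) := by
        exact mul_le_mul_right (mul_le_mul_right
          (ENNReal.rpow_le_rpow step3 hθpos.le) _) _
    _ = ENNReal.ofReal (cU * c₀ * (cL⁻¹ ^ θ)) * (μj α β E) ^ θ := by
        rw [ENNReal.mul_rpow_of_nonneg _ _ hθpos.le,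
          ENNReal.ofReal_rpow_of_pos (by positivity),
          ENNReal.ofReal_mul (mul_nonneg hcUpos.le hc₀.le),
          ENNReal.ofReal_mul hcUpos.le]
        ring

lemma layercake_bound {α β : ℝ} (hβα : β < α) (hβ : -(1/2:ℝ) < β) :
    ∃ c : ℝ, 0 < c ∧ ∀ f : ℝ → ℂ, Measurable f →
      ∫⁻ r in Set.Ioc (0:ℝ) (1/2),
          ENNReal.ofReal (‖f r‖ * (r ^ (-(α + 1/2)) * Δj α β r)) ≤
        ENNReal.ofReal c *
          ∫⁻ s in Set.Ioi (0:ℝ),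
            (μj α β {r : ℝ | r ∈ Set.Ioc (0:ℝ) (1/2) ∧ s < ‖f r‖}) ^
              ((2*α+3)/(4*α+4)) := by
  have hα : -(1/2:ℝ) < α := lt_trans hβ hβα
  obtain ⟨c, hc, hset⟩ := setIneqΔ hβα hβ
  refine ⟨c, hc, ?_⟩
  intro f hf
  have hgm : Measurable fun r : ℝ => ENNReal.ofReal (r ^ (-(α + 1/2)) * Δj α β r) := by
    apply Measurable.ennreal_ofReal
    exact (by measurability : Measurable fun r : ℝ => r ^ (-(α + 1/2))).mul
      (measurable_Δj (by linarith) (by linarith))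
  set ν : Measure ℝ := (volume.restrict (Set.Ioc (0:ℝ) (1/2))).withDensity
      (fun r => ENNReal.ofReal (r ^ (-(α + 1/2)) * Δj α β r)) with hν
  have hLHS : ∫⁻ r in Set.Ioc (0:ℝ) (1/2),
      ENNReal.ofReal (‖f r‖ * (r ^ (-(α + 1/2)) * Δj α β r)) =
      ∫⁻ r, ENNReal.ofReal ‖f r‖ ∂ν := by
    rw [hν, lintegral_withDensity_eq_lintegral_mul _ hgm hf.norm.ennreal_ofReal]
    refine setLIntegral_congr_fun measurableSet_Ioc (fun r hr => ?_)
    simp only [Pi.mul_apply]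
    rw [← ENNReal.ofReal_mul (mul_nonneg (Real.rpow_nonneg hr.1.le _) (Δj_nonneg hr.1.le)),
      mul_comm (‖f r‖)]
  rw [hLHS, lintegral_eq_lintegral_meas_lt ν
      (Filter.Eventually.of_forall fun r => norm_nonneg _) hf.norm.aemeasurable]
  have hbnd : ∀ s ∈ Set.Ioi (0:ℝ), ν {r : ℝ | s < ‖f r‖} ≤
      ENNReal.ofReal c *
        (μj α β {r : ℝ | r ∈ Set.Ioc (0:ℝ) (1/2) ∧ s < ‖f r‖}) ^ ((2*α+3)/(4*α+4)) := by
    intro s _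
    have hms : MeasurableSet {r : ℝ | s < ‖f r‖} := by
      exact measurableSet_lt measurable_const hf.norm
    have hE' : MeasurableSet {r : ℝ | r ∈ Set.Ioc (0:ℝ) (1/2) ∧ s < ‖f r‖} :=
      measurableSet_Ioc.inter hms
    have hsub : {r : ℝ | r ∈ Set.Ioc (0:ℝ) (1/2) ∧ s < ‖f r‖} ⊆ Set.Ioc (0:ℝ) (1/2) :=
      fun r hr => hr.1
    have hνval : ν {r : ℝ | s < ‖f r‖} =
        ∫⁻ r in {r : ℝ | r ∈ Set.Ioc (0:ℝ) (1/2) ∧ s < ‖f r‖},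
          ENNReal.ofReal (r ^ (-(α + 1/2)) * Δj α β r) := by
      have hseteq : {r : ℝ | s < ‖f r‖} ∩ Set.Ioc (0:ℝ) (1/2) =
          {r : ℝ | r ∈ Set.Ioc (0:ℝ) (1/2) ∧ s < ‖f r‖} := by
        ext r; simp only [Set.mem_inter_iff, Set.mem_setOf_eq]; tauto
      rw [hν, withDensity_apply _ hms, Measure.restrict_restrict hms, hseteq]
    rw [hνval]
    exact hset _ hE' hsub
  calc ∫⁻ s in Set.Ioi (0:ℝ), ν {r : ℝ | s < ‖f r‖}
      ≤ ∫⁻ s in Set.Ioi (0:ℝ), ENNReal.ofReal c *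
          (μj α β {r : ℝ | r ∈ Set.Ioc (0:ℝ) (1/2) ∧ s < ‖f r‖}) ^ ((2*α+3)/(4*α+4)) :=
        setLIntegral_mono' measurableSet_Ioi hbnd
    _ = ENNReal.ofReal c *
          ∫⁻ s in Set.Ioi (0:ℝ),
            (μj α β {r : ℝ | r ∈ Set.Ioc (0:ℝ) (1/2) ∧ s < ‖f r‖}) ^ ((2*α+3)/(4*α+4)) :=
        lintegral_const_mul' _ _ ENNReal.ofReal_ne_top

lemma lint_Ici_rpow_neg_two : ∫⁻ t in Set.Ici (1:ℝ), ENNReal.ofReal (t ^ (-2:ℝ)) = 1 := by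
  rw [Measure.restrict_congr_set Ioi_ae_eq_Ici.symm]
  rw [← ofReal_integral_eq_lintegral_ofReal
    (integrableOn_Ioi_rpow_of_lt (by norm_num) one_pos)
    (by filter_upwards [ae_restrict_mem measurableSet_Ioi] with t ht
        exact Real.rpow_nonneg (le_of_lt (lt_trans one_pos ht)) _)]
  rw [integral_Ioi_rpow_of_lt (by norm_num) one_pos]
  norm_num



theorem stmt13 (α β : ℝ) (hβα : β < α) (hβ : -(1/2 : ℝ) < β) :
    ∃ C : ℝ, 0 < C ∧
      ∀ K : ℝ → ℝ → ℂ, Measurable (Function.uncurry K) →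
        (∀ t r : ℝ, 1 ≤ t → r ∈ Set.Ioc (0 : ℝ) (1/2) →
          ‖K t r‖ ≤ Real.exp (-(α + β + 1) * t) * t⁻¹ * r ^ (-(α + 1/2))) →
        ∀ f : ℝ → ℂ, Measurable f →
          (∫⁻ t in Set.Ici (1 : ℝ),
              ENNReal.ofReal
                (‖∫ r in Set.Ioc (0 : ℝ) (1/2), K t r * f r * ((Δj α β r : ℝ) : ℂ)‖ ^ 2 *
                  Δj α β t)) ^ (1 / (2 : ℝ)) ≤
            ENNReal.ofReal C *
              ∫⁻ s in Set.Ioi (0 : ℝ),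
                (μj α β {r : ℝ | r ∈ Set.Ioc (0 : ℝ) (1/2) ∧ s < ‖f r‖}) ^
                  (1 / ((4 * α + 4) / (2 * α + 3))) := by
  have hα : -(1/2:ℝ) < α := lt_trans hβ hβα
  set cf : ℝ := (2:ℝ) ^ (2*β+1) with hcf
  have hcfpos : 0 < cf := Real.rpow_pos_of_pos (by norm_num) _
  have hcf2pos : 0 < cf ^ ((1:ℝ)/2) := Real.rpow_pos_of_pos hcfpos _
  obtain ⟨c₂, hc₂, hlc⟩ := layercake_bound hβα hβ
  refine ⟨cf ^ ((1:ℝ)/2) * c₂, by positivity, ?_⟩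
  intro K hK hKb f hf
  set I : ENNReal := ∫⁻ r in Set.Ioc (0:ℝ) (1/2),
      ENNReal.ofReal (‖f r‖ * (r ^ (-(α + 1/2)) * Δj α β r)) with hI
  have claim1 : (∫⁻ t in Set.Ici (1:ℝ),
      ENNReal.ofReal
        (‖∫ r in Set.Ioc (0:ℝ) (1/2), K t r * f r * ((Δj α β r : ℝ) : ℂ)‖ ^ 2 *
          Δj α β t)) ^ (1 / (2:ℝ)) ≤ ENNReal.ofReal (cf ^ ((1:ℝ)/2)) * I := by
    by_cases hItop : I = ⊤
    · rw [hItop, ENNReal.mul_top (ENNReal.ofReal_pos.mpr hcf2pos).ne']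
      exact le_top
    · have hnorm : ∀ t : ℝ, 1 ≤ t →
          ‖∫ r in Set.Ioc (0:ℝ) (1/2), K t r * f r * ((Δj α β r : ℝ) : ℂ)‖ ≤
            Real.exp (-(α+β+1)*t) * t⁻¹ * I.toReal := by
        intro t ht
        have ht0 : (0:ℝ) < t := lt_of_lt_of_le one_pos ht
        have hcnn : (0:ℝ) ≤ Real.exp (-(α+β+1)*t) * t⁻¹ :=
          mul_nonneg (Real.exp_pos _).le (inv_nonneg.2 ht0.le)
        refine le_trans (norm_integral_le_lintegral_norm _) ?_
        have hle : (∫⁻ r in Set.Ioc (0:ℝ) (1/2),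
            ENNReal.ofReal ‖K t r * f r * ((Δj α β r : ℝ) : ℂ)‖) ≤
            ENNReal.ofReal (Real.exp (-(α+β+1)*t) * t⁻¹) * I := by
          rw [hI, ← lintegral_const_mul' _ _ ENNReal.ofReal_ne_top]
          refine setLIntegral_mono' measurableSet_Ioc (fun r hr => ?_)
          rw [← ENNReal.ofReal_mul hcnn]
          apply ENNReal.ofReal_le_ofReal
          rw [norm_mul, norm_mul]
          have hΔeq : ‖((Δj α β r : ℝ) : ℂ)‖ = Δj α β r := by
            rw [Complex.norm_real, Real.norm_eq_abs, abs_of_nonneg (Δj_nonneg hr.1.le)]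
          rw [hΔeq]
          have h1 : ‖K t r‖ * ‖f r‖ * Δj α β r ≤
              (Real.exp (-(α+β+1)*t) * t⁻¹ * r ^ (-(α + 1/2))) * ‖f r‖ * Δj α β r :=
            mul_le_mul_of_nonneg_right
              (mul_le_mul_of_nonneg_right (hKb t r ht hr) (norm_nonneg _))
              (Δj_nonneg hr.1.le)
          refine le_trans h1 (le_of_eq ?_); ring
        have hRne : ENNReal.ofReal (Real.exp (-(α+β+1)*t) * t⁻¹) * I ≠ ⊤ :=
          ENNReal.mul_ne_top ENNReal.ofReal_ne_top hItop
        have h2 := ENNReal.toReal_mono hRne hle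
        refine le_trans h2 (le_of_eq ?_)
        rw [ENNReal.toReal_mul, ENNReal.toReal_ofReal hcnn]
      have hexp : ∀ t ∈ Set.Ici (1:ℝ),
          ENNReal.ofReal
            (‖∫ r in Set.Ioc (0:ℝ) (1/2), K t r * f r * ((Δj α β r : ℝ) : ℂ)‖ ^ 2 *
              Δj α β t) ≤
          ENNReal.ofReal (cf * I.toReal ^ 2) * ENNReal.ofReal (t ^ (-2:ℝ)) := by
        intro t ht
        have ht' : (1:ℝ) ≤ t := ht
        have ht0 : (0:ℝ) < t := lt_of_lt_of_le one_pos ht'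
        rw [← ENNReal.ofReal_mul (mul_nonneg hcfpos.le (sq_nonneg _))]
        apply ENNReal.ofReal_le_ofReal
        have hn := hnorm t ht'
        have hsq : ‖∫ r in Set.Ioc (0:ℝ) (1/2), K t r * f r * ((Δj α β r : ℝ) : ℂ)‖ ^ 2 ≤
            (Real.exp (-(α+β+1)*t) * t⁻¹ * I.toReal) ^ 2 :=
          pow_le_pow_left₀ (norm_nonneg _) hn 2
        have hΔt := Δj_le_exp (α := α) (β := β) (by linarith) (by linarith) ht0.le
        have he1 : Real.exp (-(α+β+1)*t) ^ 2 * Real.exp ((2*α+2*β+2)*t) = 1 := by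
          rw [sq, ← Real.exp_add, ← Real.exp_add,
            show (-(α+β+1)*t) + (-(α+β+1)*t) + ((2*α+2*β+2)*t) = 0 by ring, Real.exp_zero]
        have ht2 : t ^ (-2:ℝ) = t⁻¹ ^ 2 := by
          rw [show (-2:ℝ) = -((2:ℕ):ℝ) by norm_num, Real.rpow_neg ht0.le,
            Real.rpow_natCast, inv_pow]
        rw [ht2]
        calc ‖∫ r in Set.Ioc (0:ℝ) (1/2), K t r * f r * ((Δj α β r : ℝ) : ℂ)‖ ^ 2 *
              Δj α β t
            ≤ (Real.exp (-(α+β+1)*t) * t⁻¹ * I.toReal) ^ 2 * Δj α β t :=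
              mul_le_mul_of_nonneg_right hsq (Δj_nonneg ht0.le)
          _ = Real.exp (-(α+β+1)*t) ^ 2 * Δj α β t * (t⁻¹ ^ 2 * I.toReal ^ 2) := by ring
          _ ≤ Real.exp (-(α+β+1)*t) ^ 2 * (cf * Real.exp ((2*α+2*β+2)*t)) *
                (t⁻¹ ^ 2 * I.toReal ^ 2) := by
              apply mul_le_mul_of_nonneg_right
                (mul_le_mul_of_nonneg_left hΔt (sq_nonneg _))
                (mul_nonneg (sq_nonneg _) (sq_nonneg _))
          _ = cf * I.toReal ^ 2 * t⁻¹ ^ 2 := by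
              linear_combination (cf * (t⁻¹ ^ 2 * I.toReal ^ 2)) * he1
      have hint : (∫⁻ t in Set.Ici (1:ℝ),
          ENNReal.ofReal
            (‖∫ r in Set.Ioc (0:ℝ) (1/2), K t r * f r * ((Δj α β r : ℝ) : ℂ)‖ ^ 2 *
              Δj α β t)) ≤ ENNReal.ofReal (cf * I.toReal ^ 2) := by
        calc _ ≤ ∫⁻ t in Set.Ici (1:ℝ),
              ENNReal.ofReal (cf * I.toReal ^ 2) * ENNReal.ofReal (t ^ (-2:ℝ)) :=
            setLIntegral_mono' measurableSet_Ici hexp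
          _ = ENNReal.ofReal (cf * I.toReal ^ 2) *
                ∫⁻ t in Set.Ici (1:ℝ), ENNReal.ofReal (t ^ (-2:ℝ)) :=
            lintegral_const_mul' _ _ ENNReal.ofReal_ne_top
          _ = ENNReal.ofReal (cf * I.toReal ^ 2) := by
            rw [lint_Ici_rpow_neg_two, mul_one]
      refine le_trans (ENNReal.rpow_le_rpow hint (by norm_num)) ?_
      rw [ENNReal.ofReal_rpow_of_nonneg (mul_nonneg hcfpos.le (sq_nonneg _)) (by norm_num)]
      have heq : (cf * I.toReal ^ 2) ^ ((1:ℝ)/2) = cf ^ ((1:ℝ)/2) * I.toReal := by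
        rw [Real.mul_rpow hcfpos.le (sq_nonneg _)]
        congr 1
        rw [← Real.rpow_natCast I.toReal 2, ← Real.rpow_mul ENNReal.toReal_nonneg]
        norm_num
      rw [show (1:ℝ)/2 = 1/(2:ℝ) by norm_num] at heq
      rw [heq, ENNReal.ofReal_mul hcf2pos.le, ENNReal.ofReal_toReal hItop]
  have claim2 := hlc f hf
  rw [one_div_div]
  calc (∫⁻ t in Set.Ici (1:ℝ),
      ENNReal.ofReal
        (‖∫ r in Set.Ioc (0:ℝ) (1/2), K t r * f r * ((Δj α β r : ℝ) : ℂ)‖ ^ 2 *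
          Δj α β t)) ^ (1 / (2:ℝ))
      ≤ ENNReal.ofReal (cf ^ ((1:ℝ)/2)) * I := claim1
    _ ≤ ENNReal.ofReal (cf ^ ((1:ℝ)/2)) * (ENNReal.ofReal c₂ *
          ∫⁻ s in Set.Ioi (0:ℝ),
            (μj α β {r : ℝ | r ∈ Set.Ioc (0:ℝ) (1/2) ∧ s < ‖f r‖}) ^
              ((2*α+3)/(4*α+4))) := mul_le_mul_right claim2 _
    _ = ENNReal.ofReal (cf ^ ((1:ℝ)/2) * c₂) *
          ∫⁻ s in Set.Ioi (0:ℝ),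
            (μj α β {r : ℝ | r ∈ Set.Ioc (0:ℝ) (1/2) ∧ s < ‖f r‖}) ^
              ((2*α+3)/(4*α+4)) := by
        rw [ENNReal.ofReal_mul hcf2pos.le, mul_assoc]
end
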